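/- arXiv:1209.5179 — 9 statements merged into one kernel-verified Lean document; each statement's English description precedes it below -/
import Mathlib

section
/- Let f : I° ⊆ ℝ → ℝ be differentiable on the open interval I°, a, b ∈ I° with a < b, and g : [a,b] → ℝ with f', g integrable on [a,b]. Then for all x ∈ [a,b]: f(a)·∫_a^x g(s) ds + f(b)·∫_x^b g(s) ds − ∫_a^b f(s)g(s) ds = ∫_a^b (∫_x^t g(s) ds)·f'(t) dt. -/
open MeasureTheory Set

lemma swap_aux (g f' : ℝ → ℝ) (c d : ℝ)
    (hg : IntegrableOn g (Ioc c d)) (hf' : IntegrableOn f' (Ioc c d)) :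
    ∫ t in Ioc c d, (∫ s in Ioc c t, g s) * f' t
      = ∫ s in Ioc c d, g s * ∫ t in Ioc s d, f' t := by
  set μ := volume.restrict (Ioc c d) with hμ
  have hmeas : MeasurableSet {p : ℝ × ℝ | p.2 ≤ p.1} :=
    measurableSet_le measurable_snd measurable_fst
  have hprod : Integrable (fun p : ℝ × ℝ => f' p.1 * g p.2) (μ.prod μ) :=
    hf'.mul_prod hg
  have hind : Integrable ({p : ℝ × ℝ | p.2 ≤ p.1}.indicator
      (fun p => f' p.1 * g p.2)) (μ.prod μ) := hprod.indicator hmeas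
  have hswap := MeasureTheory.integral_integral_swap
    (f := fun t s => {p : ℝ × ℝ | p.2 ≤ p.1}.indicator (fun p => f' p.1 * g p.2) (t, s))
    (μ := μ) (ν := μ) (by exact hind)
  have hL : (∫ t, ∫ s, {p : ℝ × ℝ | p.2 ≤ p.1}.indicator
      (fun p => f' p.1 * g p.2) (t, s) ∂μ ∂μ)
      = ∫ t in Ioc c d, (∫ s in Ioc c t, g s) * f' t := by
    rw [hμ]
    refine setIntegral_congr_fun measurableSet_Ioc (fun t ht => ?_)
    have h1 : (fun s => {p : ℝ × ℝ | p.2 ≤ p.1}.indicator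
        (fun p => f' p.1 * g p.2) (t, s))
        = (Iic t).indicator (fun s => f' t * g s) := by
      funext s
      by_cases h : s ≤ t <;>
        simp [Set.indicator_apply, Set.mem_setOf_eq, Set.mem_Iic, h]
    rw [h1, integral_indicator measurableSet_Iic,
      Measure.restrict_restrict measurableSet_Iic]
    have h2 : Iic t ∩ Ioc c d = Ioc c t := by
      rw [Set.inter_comm, Set.Ioc_inter_Iic, min_eq_right ht.2]
    rw [h2, integral_const_mul, mul_comm]
  have hR : (∫ s, ∫ t, {p : ℝ × ℝ | p.2 ≤ p.1}.indicator
      (fun p => f' p.1 * g p.2) (t, s) ∂μ ∂μ)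
      = ∫ s in Ioc c d, g s * ∫ t in Ioc s d, f' t := by
    rw [hμ]
    refine setIntegral_congr_fun measurableSet_Ioc (fun s hs => ?_)
    have h1 : (fun t => {p : ℝ × ℝ | p.2 ≤ p.1}.indicator
        (fun p => f' p.1 * g p.2) (t, s))
        = (Ici s).indicator (fun t => f' t * g s) := by
      funext t
      by_cases h : s ≤ t <;>
        simp [Set.indicator_apply, Set.mem_setOf_eq, Set.mem_Ici, h]
    rw [h1, integral_indicator measurableSet_Ici,
      Measure.restrict_restrict measurableSet_Ici]
    have h2 : Ici s ∩ Ioc c d = Icc s d := by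
      ext u
      simp only [Set.mem_inter_iff, Set.mem_Ici, Set.mem_Ioc, Set.mem_Icc]
      exact ⟨fun ⟨h1, _, h3⟩ => ⟨h1, h3⟩, fun ⟨h1, h3⟩ => ⟨h1, hs.1.trans_le h1, h3⟩⟩
    rw [h2, integral_Icc_eq_integral_Ioc, integral_mul_const, mul_comm]
  rw [← hL, hswap, hR]

theorem stmt_0 (f f' g : ℝ → ℝ) (a b : ℝ) (hab : a < b)
    (I : Set ℝ) (hI : IsOpen I) (hIab : Icc a b ⊆ I)
    (hf : ∀ t ∈ I, HasDerivAt f (f' t) t)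
    (hf' : IntervalIntegrable f' volume a b)
    (hg : IntervalIntegrable g volume a b)
    (x : ℝ) (hx : x ∈ Icc a b) :
    f a * (∫ s in a..x, g s) + f b * (∫ s in x..b, g s) - ∫ s in a..b, f s * g s
      = ∫ t in a..b, (∫ s in x..t, g s) * f' t := by
  obtain ⟨hax, hxb⟩ := hx
  have hsub1 : uIcc a x ⊆ uIcc a b := by
    rw [uIcc_of_le hax, uIcc_of_le hab.le]; exact Icc_subset_Icc le_rfl hxb
  have hsub2 : uIcc x b ⊆ uIcc a b := by
    rw [uIcc_of_le hxb, uIcc_of_le hab.le]; exact Icc_subset_Icc hax le_rfl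
  have hfc : ContinuousOn f (uIcc a b) := fun t ht =>
    (hf t (hIab (by rwa [uIcc_of_le hab.le] at ht))).continuousAt.continuousWithinAt
  -- FTC
  have hftc : ∀ s ∈ Icc a b, ∀ u ∈ Icc a b, s ≤ u → (∫ t in s..u, f' t) = f u - f s := by
    intro s hs u hu hsu
    have hsub : uIcc s u ⊆ Icc a b := by
      rw [uIcc_of_le hsu]; exact Icc_subset_Icc hs.1 hu.2
    refine intervalIntegral.integral_eq_sub_of_hasDerivAt
      (fun t ht => hf t (hIab (hsub ht))) (hf'.mono_set ?_)
    rwa [uIcc_of_le hab.le]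
  have hgax : IntervalIntegrable g volume a x := hg.mono_set hsub1
  have hgxb : IntervalIntegrable g volume x b := hg.mono_set hsub2
  have hf'ax : IntervalIntegrable f' volume a x := hf'.mono_set hsub1
  have hf'xb : IntervalIntegrable f' volume x b := hf'.mono_set hsub2
  have hGc : ContinuousOn (fun t => ∫ s in x..t, g s) (uIcc a b) :=
    intervalIntegral.continuousOn_primitive_interval' hg
      (by rw [uIcc_of_le hab.le]; exact ⟨hax, hxb⟩)
  have hGf' : IntervalIntegrable (fun t => (∫ s in x..t, g s) * f' t) volume a b :=
    hf'.continuousOn_mul hGc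
  have hfg : IntervalIntegrable (fun s => f s * g s) volume a b :=
    hg.continuousOn_mul hfc
  have hfgax : IntervalIntegrable (fun s => f s * g s) volume a x := hfg.mono_set hsub1
  have hfgxb : IntervalIntegrable (fun s => f s * g s) volume x b := hfg.mono_set hsub2
  -- second piece : over [x, b]
  have hpart2 : (∫ t in x..b, (∫ s in x..t, g s) * f' t)
      = f b * (∫ s in x..b, g s) - ∫ s in x..b, f s * g s := by
    rw [intervalIntegral.integral_of_le hxb]
    have e1 : ∫ t in Ioc x b, (∫ s in x..t, g s) * f' t
        = ∫ t in Ioc x b, (∫ s in Ioc x t, g s) * f' t :=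
      setIntegral_congr_fun measurableSet_Ioc
        (fun t ht => by rw [intervalIntegral.integral_of_le ht.1.le])
    rw [e1, swap_aux g f' x b hgxb.1 hf'xb.1]
    have e2 : ∫ s in Ioc x b, g s * ∫ t in Ioc s b, f' t
        = ∫ s in Ioc x b, (f b * g s - f s * g s) := by
      refine setIntegral_congr_fun measurableSet_Ioc (fun s hs => ?_)
      rw [← intervalIntegral.integral_of_le hs.2,
        hftc s ⟨hax.trans hs.1.le, hs.2⟩ b ⟨hab.le, le_rfl⟩ hs.2]
      ring
    rw [e2, integral_sub ((hgxb.1).const_mul (f b)) hfgxb.1, integral_const_mul,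
      intervalIntegral.integral_of_le hxb, intervalIntegral.integral_of_le hxb]
  -- first piece : over [a, x]
  have hpart1 : (∫ t in a..x, (∫ s in x..t, g s) * f' t)
      = f a * (∫ s in a..x, g s) - ∫ s in a..x, f s * g s := by
    rw [intervalIntegral.integral_of_le hax]
    have e1 : ∫ t in Ioc a x, (∫ s in x..t, g s) * f' t
        = ∫ t in Ioc a x, -(f' t * ∫ s in Ioc t x, g s) :=
      setIntegral_congr_fun measurableSet_Ioc (fun t ht => by
        rw [intervalIntegral.integral_symm, intervalIntegral.integral_of_le ht.2]
        ring)
    have e2 := swap_aux f' g a x hf'ax.1 hgax.1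
    have e3 : ∫ t in Ioc a x, (∫ s in Ioc a t, f' s) * g t
        = ∫ t in Ioc a x, (f t * g t - f a * g t) := by
      refine setIntegral_congr_fun measurableSet_Ioc (fun t ht => ?_)
      rw [← intervalIntegral.integral_of_le ht.1.le,
        hftc a ⟨le_rfl, hab.le⟩ t ⟨ht.1.le, ht.2.trans hxb⟩ ht.1.le]
      ring
    rw [e1, integral_neg, ← e2, e3,
      integral_sub hfgax.1 ((hgax.1).const_mul (f a)), integral_const_mul,
      intervalIntegral.integral_of_le hax, intervalIntegral.integral_of_le hax]
    ring
  rw [← intervalIntegral.integral_add_adjacent_intervals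
      (hGf'.mono_set hsub1) (hGf'.mono_set hsub2), hpart1, hpart2,
    ← intervalIntegral.integral_add_adjacent_intervals hfgax hfgxb]
  ring
end

section
/- Let f : I° ⊆ ℝ → ℝ be differentiable on I°, a, b ∈ I° with a < b, g : [a,b] → ℝ with f', g ∈ L[a,b], and x ∈ [a,b]. Define S_g(t) = ∫_a^t g(s) ds for t ∈ [a,x) and S_g(t) = −∫_t^b g(s) ds for t ∈ [x,b]. Then f(x)·∫_a^b g(s) ds − ∫_a^b f(s)g(s) ds = ∫_a^b S_g(t)·f'(t) dt. -/
open MeasureTheory Set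

/-- Triangle Fubini: swap the order of integration over the triangle
`p < s < t ≤ q`. -/
lemma tri_swap (u v : ℝ → ℝ) {p q : ℝ}
    (hu : IntegrableOn u (Ioc p q)) (hv : IntegrableOn v (Ioc p q)) :
    ∫ t in Ioc p q, (∫ s in Ioc p t, u s) * v t
      = ∫ s in Ioc p q, u s * ∫ t in Ioc s q, v t := by
  set μ := volume.restrict (Ioc p q) with hμ
  have hmeas : MeasurableSet {z : ℝ × ℝ | z.1 < z.2} :=
    (isOpen_lt continuous_fst continuous_snd).measurableSet
  set F : ℝ × ℝ → ℝ := ({z : ℝ × ℝ | z.1 < z.2}).indicator (fun z => u z.1 * v z.2) with hF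
  have hFi : Integrable F (μ.prod μ) := (hu.mul_prod hv).indicator hmeas
  have key := integral_integral_swap (f := fun s t => F (s, t)) (μ := μ) (ν := μ)
    (by exact hFi)
  have left : ∀ t ∈ Ioc p q, (∫ s, F (s, t) ∂μ) = (∫ s in Ioc p t, u s) * v t := by
    intro t ht
    have h1 : (fun s => F (s, t)) = (Iio t).indicator (fun s => u s * v t) := by
      funext s
      by_cases h : s < t <;> simp [hF, Set.indicator, h]
    rw [h1, hμ, setIntegral_indicator measurableSet_Iio]
    have h2 : Ioc p q ∩ Iio t = Ioo p t := by
      ext s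
      constructor
      · rintro ⟨⟨h1', _⟩, h3⟩; exact ⟨h1', h3⟩
      · rintro ⟨h1', h3⟩; exact ⟨⟨h1', h3.le.trans ht.2⟩, h3⟩
    rw [h2, integral_mul_const, ← integral_Ioc_eq_integral_Ioo]
  have right : ∀ s ∈ Ioc p q, (∫ t, F (s, t) ∂μ) = u s * ∫ t in Ioc s q, v t := by
    intro s hs
    have h1 : (fun t => F (s, t)) = (Ioi s).indicator (fun t => u s * v t) := by
      funext t
      by_cases h : s < t <;> simp [hF, Set.indicator, h]
    rw [h1, hμ, setIntegral_indicator measurableSet_Ioi, Set.Ioc_inter_Ioi,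
      sup_eq_right.2 hs.1.le, integral_const_mul]
  calc ∫ t in Ioc p q, (∫ s in Ioc p t, u s) * v t
      = ∫ t, ∫ s, F (s, t) ∂μ ∂μ := by
        rw [hμ]; exact (setIntegral_congr_fun measurableSet_Ioc
          (fun t ht => (left t ht).symm))
    _ = ∫ s, ∫ t, F (s, t) ∂μ ∂μ := key.symm
    _ = ∫ s in Ioc p q, u s * ∫ t in Ioc s q, v t := by
        rw [hμ]; exact setIntegral_congr_fun measurableSet_Ioc right

lemma tri_swap' (u v : ℝ → ℝ) {p q : ℝ}
    (hu : IntegrableOn u (Ioc p q)) (hv : IntegrableOn v (Ioc p q)) :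
    ∫ t in Ioc p q, (∫ s in Ioc t q, u s) * v t
      = ∫ s in Ioc p q, u s * ∫ t in Ioc p s, v t := by
  have h := tri_swap v u hv hu
  rw [show (fun t => (∫ s in Ioc t q, u s) * v t)
      = fun t => v t * ∫ s in Ioc t q, u s from funext fun t => mul_comm _ _]
  rw [show (fun s => u s * ∫ t in Ioc p s, v t)
      = fun s => (∫ t in Ioc p s, v t) * u s from funext fun s => mul_comm _ _]
  exact h.symm

theorem stmt_1 (f f' g : ℝ → ℝ) (a b : ℝ) (hab : a < b)
    (I : Set ℝ) (hI : IsOpen I) (hIab : Icc a b ⊆ I)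
    (hf : ∀ t ∈ I, HasDerivAt f (f' t) t)
    (hf' : IntervalIntegrable f' volume a b)
    (hg : IntervalIntegrable g volume a b)
    (x : ℝ) (hx : x ∈ Icc a b)
    (Sg : ℝ → ℝ)
    (hSg : ∀ t, Sg t = if t < x then ∫ s in a..t, g s else -∫ s in t..b, g s) :
    f x * (∫ s in a..b, g s) - (∫ s in a..b, f s * g s)
      = ∫ t in a..b, Sg t * f' t := by
  obtain ⟨hax, hxb⟩ := hx
  have hfc : ContinuousOn f (Icc a b) := fun t ht =>
    (hf t (hIab ht)).continuousAt.continuousWithinAt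
  have hsub : ∀ s ∈ Icc a b, ∀ t ∈ Icc a b, uIcc s t ⊆ Icc a b := by
    intro s hs t ht
    rw [← uIcc_of_le hab.le]
    exact uIcc_subset_uIcc (by rwa [uIcc_of_le hab.le]) (by rwa [uIcc_of_le hab.le])
  have ftc : ∀ s ∈ Icc a b, ∀ t ∈ Icc a b, ∫ r in s..t, f' r = f t - f s := by
    intro s hs t ht
    apply intervalIntegral.integral_eq_sub_of_hasDerivAt
    · exact fun r hr => hf r (hIab (hsub s hs t ht hr))
    · exact hf'.mono_set (by rw [uIcc_of_le hab.le]; exact hsub s hs t ht)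
  have hxab : x ∈ Icc a b := ⟨hax, hxb⟩
  have haab : a ∈ Icc a b := ⟨le_refl a, hab.le⟩
  have hbab : b ∈ Icc a b := ⟨hab.le, le_refl b⟩
  have hgax : IntegrableOn g (Ioc a x) := hg.1.mono_set (Ioc_subset_Ioc_right hxb)
  have hgxb : IntegrableOn g (Ioc x b) := hg.1.mono_set (Ioc_subset_Ioc_left hax)
  have hf'ax : IntegrableOn f' (Ioc a x) := hf'.1.mono_set (Ioc_subset_Ioc_right hxb)
  have hf'xb : IntegrableOn f' (Ioc x b) := hf'.1.mono_set (Ioc_subset_Ioc_left hax)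
  -- a.e. away from x
  have haex : ∀ᵐ t ∂(volume : Measure ℝ), t ≠ x := by
    rw [ae_iff]
    simpa [not_not, Set.setOf_eq_eq_singleton] using Real.volume_singleton (a := x)
  -- Piece 1 : on [a, x]
  have p1 : ∫ t in a..x, Sg t * f' t = ∫ s in a..x, g s * (f x - f s) := by
    have hae : ∀ᵐ t ∂(volume : Measure ℝ), t ∈ Set.uIoc a x →
        Sg t * f' t = (∫ s in Ioc a t, g s) * f' t := by
      filter_upwards [haex] with t htne htm
      rw [Set.uIoc_of_le hax] at htm
      have htx : t < x := lt_of_le_of_ne htm.2 htne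
      rw [hSg t, if_pos htx, intervalIntegral.integral_of_le htm.1.le]
    rw [intervalIntegral.integral_congr_ae hae,
      intervalIntegral.integral_of_le hax, tri_swap g f' hgax hf'ax,
      intervalIntegral.integral_of_le hax]
    apply setIntegral_congr_fun measurableSet_Ioc
    intro s hs
    have hsab : s ∈ Icc a b := ⟨hs.1.le, hs.2.trans hxb⟩
    show g s * (∫ t in Ioc s x, f' t) = g s * (f x - f s)
    rw [← intervalIntegral.integral_of_le hs.2, ftc s hsab x hxab]
  -- Piece 2 : on [x, b]
  have p2 : ∫ t in x..b, Sg t * f' t = ∫ s in x..b, g s * (f x - f s) := by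
    rw [intervalIntegral.integral_of_le hxb]
    calc ∫ t in Ioc x b, Sg t * f' t
        = ∫ t in Ioc x b, -((∫ s in Ioc t b, g s) * f' t) := by
          apply setIntegral_congr_fun measurableSet_Ioc
          intro t ht
          show Sg t * f' t = -((∫ s in Ioc t b, g s) * f' t)
          rw [hSg t, if_neg (not_lt.2 ht.1.le),
            intervalIntegral.integral_of_le ht.2, neg_mul]
      _ = -∫ t in Ioc x b, (∫ s in Ioc t b, g s) * f' t := integral_neg _
      _ = -∫ s in Ioc x b, g s * ∫ t in Ioc x s, f' t := by
          rw [tri_swap' g f' hgxb hf'xb]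
      _ = ∫ s in Ioc x b, g s * (f x - f s) := by
          rw [← integral_neg]
          apply setIntegral_congr_fun measurableSet_Ioc
          intro s hs
          have hsab : s ∈ Icc a b := ⟨hax.trans hs.1.le, hs.2⟩
          show -(g s * ∫ t in Ioc x s, f' t) = g s * (f x - f s)
          rw [← intervalIntegral.integral_of_le hs.1.le, ftc x hxab s hsab]
          ring
      _ = ∫ s in x..b, g s * (f x - f s) := (intervalIntegral.integral_of_le hxb).symm
  -- integrability of Sg * f' on the two pieces
  have hGc : ContinuousOn (fun t => ∫ s in a..t, g s) (uIcc a x) := by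
    apply intervalIntegral.continuousOn_primitive_interval
    rw [uIcc_of_le hax, integrableOn_Icc_iff_integrableOn_Ioc]
    exact hgax
  have hKc : ContinuousOn (fun t => -∫ s in t..b, g s) (uIcc x b) := by
    apply ContinuousOn.neg
    apply intervalIntegral.continuousOn_primitive_interval_left
    rw [uIcc_of_le hxb, integrableOn_Icc_iff_integrableOn_Ioc]
    exact hgxb
  have hf'Iax : IntervalIntegrable f' volume a x :=
    hf'.mono_set (by rw [uIcc_of_le hab.le]; exact hsub a haab x hxab)
  have hf'Ixb : IntervalIntegrable f' volume x b :=
    hf'.mono_set (by rw [uIcc_of_le hab.le]; exact hsub x hxab b hbab)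
  have int1 : IntervalIntegrable (fun t => Sg t * f' t) volume a x := by
    have h0 : IntervalIntegrable (fun t => (∫ s in a..t, g s) * f' t) volume a x :=
      hf'Iax.continuousOn_mul hGc
    rw [intervalIntegrable_iff_integrableOn_Ioc_of_le hax] at h0 ⊢
    apply h0.congr
    have haex' : ∀ᵐ t ∂(volume.restrict (Ioc a x)), t ≠ x := ae_restrict_of_ae haex
    filter_upwards [haex', ae_restrict_mem measurableSet_Ioc] with t htne htm
    rw [hSg t, if_pos (lt_of_le_of_ne htm.2 htne)]
  have int2 : IntervalIntegrable (fun t => Sg t * f' t) volume x b := by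
    have h0 : IntervalIntegrable (fun t => (-∫ s in t..b, g s) * f' t) volume x b :=
      hf'Ixb.continuousOn_mul hKc
    rw [intervalIntegrable_iff_integrableOn_Ioc_of_le hxb] at h0 ⊢
    apply h0.congr
    filter_upwards [ae_restrict_mem measurableSet_Ioc] with t htm
    rw [hSg t, if_neg (not_lt.2 htm.1.le)]
  have hfc' : ContinuousOn (fun s => f x - f s) (uIcc a b) := by
    rw [uIcc_of_le hab.le]
    exact continuousOn_const.sub hfc
  have intg1 : IntervalIntegrable (fun s => g s * (f x - f s)) volume a x :=
    (hg.mono_set (by rw [uIcc_of_le hab.le]; exact hsub a haab x hxab)).mul_continuousOn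
      (hfc'.mono (by rw [uIcc_of_le hab.le]; exact hsub a haab x hxab))
  have intg2 : IntervalIntegrable (fun s => g s * (f x - f s)) volume x b :=
    (hg.mono_set (by rw [uIcc_of_le hab.le]; exact hsub x hxab b hbab)).mul_continuousOn
      (hfc'.mono (by rw [uIcc_of_le hab.le]; exact hsub x hxab b hbab))
  rw [← intervalIntegral.integral_add_adjacent_intervals int1 int2, p1, p2,
    intervalIntegral.integral_add_adjacent_intervals intg1 intg2]
  have hexp : (fun s => g s * (f x - f s)) = fun s => f x * g s - f s * g s :=
    funext fun s => by ring
  rw [hexp, intervalIntegral.integral_sub (hg.const_mul _)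
      (hg.continuousOn_mul (by rw [uIcc_of_le hab.le]; exact hfc)),
    intervalIntegral.integral_const_mul]
end

section
/- Let f be differentiable on an open interval containing [a,b] with a < b, f' ∈ L[a,b], q ≥ 1, |f'|^q convex on [a,b], and g : [a,b] → ℝ continuous. Then for all x ∈ [a,b]: |f(a)∫_a^x g + f(b)∫_x^b g − ∫_a^b fg| ≤ ‖g‖_∞ · [((x−a)² + (b−x)²)/2]^{(q−1)/q} · { [((x−a)²(3b−x−2a) + (b−x)³)/(6(b−a))]·|f'(a)|^q + [((x−a)³ + (b−x)²(2b+x−3a))/(6(b−a))]·|f'(b)|^q }^{1/q}. -/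
open MeasureTheory Set intervalIntegral

lemma polyInt (u v c0 c1 c2 : ℝ) :
    ∫ t in u..v, (c0 + c1*t + c2*t^2) =
      (c0*v + c1*v^2/2 + c2*v^3/3) - (c0*u + c1*u^2/2 + c2*u^3/3) := by
  have h : ∀ t : ℝ, HasDerivAt (fun y => c0*y + c1*y^2/2 + c2*y^3/3)
      (c0 + c1*t + c2*t^2) t := by
    intro t
    have h1 : HasDerivAt (fun y : ℝ => c0*y) c0 t := by
      simpa using (hasDerivAt_id t).const_mul c0
    have h2 : HasDerivAt (fun y : ℝ => c1*y^2/2) (c1*t) t := by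
      have := ((hasDerivAt_pow 2 t).const_mul c1).div_const 2
      exact this.congr_deriv (by push_cast; ring)
    have h3 : HasDerivAt (fun y : ℝ => c2*y^3/3) (c2*t^2) t := by
      have := ((hasDerivAt_pow 3 t).const_mul c2).div_const 3
      exact this.congr_deriv (by push_cast; ring)
    exact (h1.add h2).add h3
  rw [intervalIntegral.integral_eq_sub_of_hasDerivAt (fun t _ => h t)
    ((Continuous.intervalIntegrable (by continuity) u v))]

lemma twoHolder {p q S1 S2 T1 T2 : ℝ} (hpq : Real.HolderConjugate p q)
    (hS1 : 0 ≤ S1) (hS2 : 0 ≤ S2) (hT1 : 0 ≤ T1) (hT2 : 0 ≤ T2) :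
    S1 ^ (1/p) * T1 ^ (1/q) + S2 ^ (1/p) * T2 ^ (1/q)
      ≤ (S1 + S2) ^ (1/p) * (T1 + T2) ^ (1/q) := by
  have h := Real.inner_le_Lp_mul_Lq_of_nonneg (s := (Finset.univ : Finset (Fin 2)))
    (f := ![S1 ^ (1/p), S2 ^ (1/p)]) (g := ![T1 ^ (1/q), T2 ^ (1/q)]) hpq
    (fun i _ => by fin_cases i
                   · simpa using Real.rpow_nonneg hS1 _
                   · simpa using Real.rpow_nonneg hS2 _)
    (fun i _ => by fin_cases i
                   · simpa using Real.rpow_nonneg hT1 _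
                   · simpa using Real.rpow_nonneg hT2 _)
  have e : ∀ s S : ℝ, 0 ≤ S → s ≠ 0 → ((S ^ ((1:ℝ)/s)) ^ s) = S := fun s S hS hs => by
    rw [← Real.rpow_mul hS, one_div_mul_cancel hs, Real.rpow_one]
  simp only [Fin.sum_univ_two, Matrix.cons_val_zero, Matrix.cons_val_one, Matrix.head_cons] at h
  rwa [e p S1 hS1 hpq.ne_zero, e p S2 hS2 hpq.ne_zero,
    e q T1 hT1 hpq.symm.ne_zero, e q T2 hT2 hpq.symm.ne_zero] at h

set_option maxHeartbeats 2000000 in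
theorem stmt_3 (f f' g : ℝ → ℝ) (a b q : ℝ) (hab : a < b) (hq : 1 ≤ q)
    (I : Set ℝ) (hI : IsOpen I) (hIab : Icc a b ⊆ I)
    (hf : ∀ t ∈ I, HasDerivAt f (f' t) t)
    (hf' : IntervalIntegrable f' volume a b)
    (hconv : ConvexOn ℝ (Icc a b) (fun t => |f' t| ^ q))
    (hg : ContinuousOn g (Icc a b))
    (x : ℝ) (hx : x ∈ Icc a b) :
    |f a * (∫ s in a..x, g s) + f b * (∫ s in x..b, g s) - ∫ s in a..b, f s * g s|
      ≤ sSup ((fun t => |g t|) '' Icc a b) *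
        (((x - a) ^ 2 + (b - x) ^ 2) / 2) ^ ((q - 1) / q) *
        (((x - a) ^ 2 * (3 * b - x - 2 * a) + (b - x) ^ 3) / (6 * (b - a)) * |f' a| ^ q
          + ((x - a) ^ 3 + (b - x) ^ 2 * (2 * b + x - 3 * a)) / (6 * (b - a)) * |f' b| ^ q)
          ^ (1 / q) := by
  obtain ⟨hax, hxb⟩ := hx
  have hab' : (0:ℝ) < b - a := by linarith
  have hba : (b:ℝ) - a ≠ 0 := ne_of_gt hab'
  have hq0 : (0:ℝ) < q := by linarith
  set M := sSup ((fun t => |g t|) '' Icc a b) with hMdef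
  have hMb : ∀ t ∈ Icc a b, |g t| ≤ M := fun t ht =>
    le_csSup (isCompact_Icc.bddAbove_image hg.abs) (mem_image_of_mem _ ht)
  have hM0 : 0 ≤ M := le_trans (abs_nonneg (g a)) (hMb a ⟨le_rfl, hab.le⟩)
  have hfc : ContinuousOn f (Icc a b) := fun t ht =>
    ((hf t (hIab ht)).continuousAt).continuousWithinAt
  have subax : Icc a x ⊆ Icc a b := Icc_subset_Icc le_rfl hxb
  have subxb : Icc x b ⊆ Icc a b := Icc_subset_Icc hax le_rfl
  have uab : uIcc a b = Icc a b := uIcc_of_le hab.le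
  have cint : ∀ (u v : ℝ), Icc u v ⊆ Icc a b → u ≤ v → ∀ (F : ℝ → ℝ),
      ContinuousOn F (Icc a b) → IntervalIntegrable F volume u v := by
    intro u v h huv F hF
    apply ContinuousOn.intervalIntegrable
    rw [uIcc_of_le huv]
    exact hF.mono h
  -- step 1 : key identity
  have key : f a * (∫ s in a..x, g s) + f b * (∫ s in x..b, g s) - ∫ s in a..b, f s * g s
      = (∫ t in a..x, (f a - f t) * g t) + ∫ t in x..b, (f b - f t) * g t := by
    have hsplit : (∫ s in a..b, f s * g s)
        = (∫ s in a..x, f s * g s) + ∫ s in x..b, f s * g s :=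
      (integral_add_adjacent_intervals (cint a x subax hax _ (hfc.mul hg))
        (cint x b subxb hxb _ (hfc.mul hg))).symm
    have s1 : (∫ t in a..x, (f a - f t) * g t)
        = f a * (∫ s in a..x, g s) - ∫ t in a..x, f t * g t := by
      simp only [sub_mul]
      rw [intervalIntegral.integral_sub (cint a x subax hax (fun t => f a * g t) (continuousOn_const.mul hg))
        (cint a x subax hax (fun t => f t * g t) (hfc.mul hg)), intervalIntegral.integral_const_mul]
    have s2 : (∫ t in x..b, (f b - f t) * g t)
        = f b * (∫ s in x..b, g s) - ∫ t in x..b, f t * g t := by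
      simp only [sub_mul]
      rw [intervalIntegral.integral_sub (cint x b subxb hxb (fun t => f b * g t) (continuousOn_const.mul hg))
        (cint x b subxb hxb (fun t => f t * g t) (hfc.mul hg)), intervalIntegral.integral_const_mul]
    rw [hsplit, s1, s2]; ring
  -- pointwise FTC bounds
  have habs1 : ∀ t ∈ Icc a b, |f a - f t| ≤ ∫ s in Ioc a t, |f' s| := by
    intro t ht
    have hsub : uIcc a t ⊆ uIcc a b := by
      rw [uIcc_of_le ht.1, uab]; exact Icc_subset_Icc le_rfl ht.2
    have hFTC := intervalIntegral.integral_eq_sub_of_hasDerivAt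
      (f := f) (f' := f') (fun s hs => hf s (hIab (uab ▸ hsub hs))) (hf'.mono_set hsub)
    calc |f a - f t| = |∫ s in a..t, f' s| := by rw [hFTC, abs_sub_comm]
      _ ≤ ∫ s in a..t, |f' s| := intervalIntegral.abs_integral_le_integral_abs ht.1
      _ = ∫ s in Ioc a t, |f' s| := intervalIntegral.integral_of_le ht.1
  have habs2 : ∀ t ∈ Icc a b, |f b - f t| ≤ ∫ s in Ioc t b, |f' s| := by
    intro t ht
    have hsub : uIcc t b ⊆ uIcc a b := by
      rw [uIcc_of_le ht.2, uab]; exact Icc_subset_Icc ht.1 le_rfl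
    have hFTC := intervalIntegral.integral_eq_sub_of_hasDerivAt
      (f := f) (f' := f') (fun s hs => hf s (hIab (uab ▸ hsub hs))) (hf'.mono_set hsub)
    calc |f b - f t| = |∫ s in t..b, f' s| := by rw [hFTC]
      _ ≤ ∫ s in t..b, |f' s| := intervalIntegral.abs_integral_le_integral_abs ht.2
      _ = ∫ s in Ioc t b, |f' s| := intervalIntegral.integral_of_le ht.2
  -- convexity bound
  have hconvb : ∀ s ∈ Icc a b,
      |f' s| ^ q ≤ ((b - s) * |f' a| ^ q + (s - a) * |f' b| ^ q) / (b - a) := by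
    intro s hs
    have h1 : (0:ℝ) ≤ (b - s)/(b - a) := div_nonneg (by linarith [hs.2]) hab'.le
    have h2 : (0:ℝ) ≤ (s - a)/(b - a) := div_nonneg (by linarith [hs.1]) hab'.le
    have h3 : (b - s)/(b - a) + (s - a)/(b - a) = 1 := by field_simp; ring
    have h4 := hconv.2 (left_mem_Icc.2 hab.le) (right_mem_Icc.2 hab.le) h1 h2 h3
    have h5 : ((b - s)/(b - a)) • a + ((s - a)/(b - a)) • b = s := by
      simp only [smul_eq_mul]; field_simp; ring
    rw [h5] at h4
    have h6 : |f' s| ^ q ≤ ((b - s)/(b - a)) * |f' a| ^ q + ((s - a)/(b - a)) * |f' b| ^ q := by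
      simpa [smul_eq_mul] using h4
    exact h6.trans (le_of_eq (by ring))
  -- sup bound on |f'|
  have hDb : ∀ s ∈ Icc a b, |f' s| ≤ (max (|f' a| ^ q) (|f' b| ^ q)) ^ (1/q) := by
    intro s hs
    have h1 : |f' s| ^ q ≤ max (|f' a| ^ q) (|f' b| ^ q) := by
      refine (hconvb s hs).trans ?_
      have h2 : (b - s) * |f' a| ^ q + (s - a) * |f' b| ^ q
          ≤ (b - s) * max (|f' a| ^ q) (|f' b| ^ q) + (s - a) * max (|f' a| ^ q) (|f' b| ^ q) :=
        add_le_add (mul_le_mul_of_nonneg_left (le_max_left _ _) (by linarith [hs.2]))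
          (mul_le_mul_of_nonneg_left (le_max_right _ _) (by linarith [hs.1]))
      calc ((b - s) * |f' a| ^ q + (s - a) * |f' b| ^ q) / (b - a)
          ≤ ((b - s) * max (|f' a| ^ q) (|f' b| ^ q)
            + (s - a) * max (|f' a| ^ q) (|f' b| ^ q)) / (b - a) := by
            apply div_le_div_of_nonneg_right h2 hab'.le
        _ = max (|f' a| ^ q) (|f' b| ^ q) := by field_simp; ring
    have h7 := Real.rpow_mul (abs_nonneg (f' s)) q (1/q)
    rw [mul_one_div_cancel hq0.ne', Real.rpow_one] at h7
    rw [h7]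
    exact Real.rpow_le_rpow (Real.rpow_nonneg (abs_nonneg _) q) h1 (by positivity)
  -- explicit integral computations
  have hPhi1 : ∀ t : ℝ, (∫ s in a..t, ((b - s) * |f' a| ^ q + (s - a) * |f' b| ^ q) / (b - a))
      = ((t - a) * (2*b - a - t) * |f' a| ^ q + (t - a)^2 * |f' b| ^ q) / (2*(b - a)) := by
    intro t
    rw [intervalIntegral.integral_congr
      (g := fun s => ((b * |f' a| ^ q - a * |f' b| ^ q)/(b - a))
        + ((|f' b| ^ q - |f' a| ^ q)/(b - a))*s + 0*s^2) (fun s _ => by ring),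
      polyInt]
    field_simp
    ring
  have hPhi2 : ∀ t : ℝ, (∫ s in t..b, ((b - s) * |f' a| ^ q + (s - a) * |f' b| ^ q) / (b - a))
      = ((b - t)^2 * |f' a| ^ q + (b - t) * (b + t - 2*a) * |f' b| ^ q) / (2*(b - a)) := by
    intro t
    rw [intervalIntegral.integral_congr
      (g := fun s => ((b * |f' a| ^ q - a * |f' b| ^ q)/(b - a))
        + ((|f' b| ^ q - |f' a| ^ q)/(b - a))*s + 0*s^2) (fun s _ => by ring),
      polyInt]
    field_simp
    ring
  have hT1 : (∫ t in a..x, ((t - a) * (2*b - a - t) * |f' a| ^ q + (t - a)^2 * |f' b| ^ q) / (2*(b - a)))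
      = ((x - a)^2 * (3*b - x - 2*a) * |f' a| ^ q + (x - a)^3 * |f' b| ^ q) / (6*(b - a)) := by
    rw [intervalIntegral.integral_congr
      (g := fun t => ((|f' a| ^ q * (a^2 - 2*a*b) + |f' b| ^ q * a^2)/(2*(b - a)))
        + (((2*b*|f' a| ^ q - 2*a*|f' b| ^ q))/(2*(b - a)))*t
        + (((|f' b| ^ q - |f' a| ^ q))/(2*(b - a)))*t^2) (fun t _ => by ring),
      polyInt]
    field_simp
    ring
  have hT2 : (∫ t in x..b, ((b - t)^2 * |f' a| ^ q + (b - t) * (b + t - 2*a) * |f' b| ^ q) / (2*(b - a)))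
      = ((b - x)^3 * |f' a| ^ q + (b - x)^2 * (2*b + x - 3*a) * |f' b| ^ q) / (6*(b - a)) := by
    rw [intervalIntegral.integral_congr
      (g := fun t => ((|f' a| ^ q * b^2 + |f' b| ^ q * (b^2 - 2*a*b))/(2*(b - a)))
        + (((-2*b*|f' a| ^ q + 2*a*|f' b| ^ q))/(2*(b - a)))*t
        + (((|f' a| ^ q - |f' b| ^ q))/(2*(b - a)))*t^2) (fun t _ => by ring),
      polyInt]
    field_simp
    ring
  have hS1 : (∫ t in Ioc a x, (t - a)) = (x - a)^2/2 := by
    rw [← intervalIntegral.integral_of_le hax,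
      intervalIntegral.integral_congr (g := fun t => (-a) + 1*t + 0*t^2) (fun t _ => by ring),
      polyInt]
    ring
  have hS2 : (∫ t in Ioc x b, (b - t)) = (b - x)^2/2 := by
    rw [← intervalIntegral.integral_of_le hxb,
      intervalIntegral.integral_congr (g := fun t => b + (-1)*t + 0*t^2) (fun t _ => by ring),
      polyInt]
    ring
  -- nonnegativity of the Φ's
  have hPhi1nn : ∀ t ∈ Icc a b,
      0 ≤ ((t - a) * (2*b - a - t) * |f' a| ^ q + (t - a)^2 * |f' b| ^ q) / (2*(b - a)) := by
    intro t ht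
    have h1 : 0 ≤ (t - a) := by linarith [ht.1]
    have h2 : 0 ≤ 2*b - a - t := by linarith [ht.2]
    have hA0 : 0 ≤ |f' a| ^ q := Real.rpow_nonneg (abs_nonneg _) q
    have hB0 : 0 ≤ |f' b| ^ q := Real.rpow_nonneg (abs_nonneg _) q
    positivity
  have hPhi2nn : ∀ t ∈ Icc a b,
      0 ≤ ((b - t)^2 * |f' a| ^ q + (b - t) * (b + t - 2*a) * |f' b| ^ q) / (2*(b - a)) := by
    intro t ht
    have h1 : 0 ≤ (b - t) := by linarith [ht.2]
    have h2 : 0 ≤ b + t - 2*a := by linarith [ht.1]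
    have hA0 : 0 ≤ |f' a| ^ q := Real.rpow_nonneg (abs_nonneg _) q
    have hB0 : 0 ≤ |f' b| ^ q := Real.rpow_nonneg (abs_nonneg _) q
    positivity
  -- integrability
  have hf'm : ∀ u v : ℝ, Icc u v ⊆ Icc a b → u ≤ v → IntegrableOn f' (Ioc u v) volume := by
    intro u v h huv
    exact (hf'.mono_set (by rw [uIcc_of_le huv, uab]; exact h)).1
  have hφc : Continuous (fun s : ℝ => ((b - s) * |f' a| ^ q + (s - a) * |f' b| ^ q) / (b - a)) :=
    (((continuous_const.sub continuous_id).mul continuous_const).add ((continuous_id.sub continuous_const).mul continuous_const)).div_const _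
  have hrq_int : ∀ u v : ℝ, Icc u v ⊆ Icc a b → u ≤ v →
      IntegrableOn (fun s => |f' s| ^ q) (Ioc u v) volume := by
    intro u v h huv
    have haesm : AEStronglyMeasurable (fun s => |f' s| ^ q) (volume.restrict (Ioc u v)) :=
      (continuous_abs.rpow_const (fun y => Or.inr hq0.le)).comp_aestronglyMeasurable
        ((hf'm u v h huv).aestronglyMeasurable)
    refine Integrable.mono' (g := fun s => ((b - s) * |f' a| ^ q + (s - a) * |f' b| ^ q) / (b - a))
      (hφc.integrableOn_Ioc) haesm ?_
    refine (ae_restrict_iff' measurableSet_Ioc).2 (ae_of_all _ fun s hs => ?_)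
    rw [Real.norm_eq_abs, abs_of_nonneg (Real.rpow_nonneg (abs_nonneg _) q)]
    exact hconvb s (h ⟨hs.1.le, hs.2⟩)
  have hIq1 : ∀ t, a ≤ t → t ≤ b → (∫ s in Ioc a t, |f' s| ^ q)
      ≤ ((t - a) * (2*b - a - t) * |f' a| ^ q + (t - a)^2 * |f' b| ^ q) / (2*(b - a)) := by
    intro t h1 h2
    calc (∫ s in Ioc a t, |f' s| ^ q)
        ≤ ∫ s in Ioc a t, ((b - s) * |f' a| ^ q + (s - a) * |f' b| ^ q) / (b - a) :=
          setIntegral_mono_on (hrq_int a t (Icc_subset_Icc le_rfl h2) h1) hφc.integrableOn_Ioc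
            measurableSet_Ioc (fun s hs => hconvb s ⟨hs.1.le, hs.2.trans h2⟩)
      _ = ∫ s in a..t, ((b - s) * |f' a| ^ q + (s - a) * |f' b| ^ q) / (b - a) :=
          (intervalIntegral.integral_of_le h1).symm
      _ = _ := hPhi1 t
  have hIq2 : ∀ t, a ≤ t → t ≤ b → (∫ s in Ioc t b, |f' s| ^ q)
      ≤ ((b - t)^2 * |f' a| ^ q + (b - t) * (b + t - 2*a) * |f' b| ^ q) / (2*(b - a)) := by
    intro t h1 h2
    calc (∫ s in Ioc t b, |f' s| ^ q)
        ≤ ∫ s in Ioc t b, ((b - s) * |f' a| ^ q + (s - a) * |f' b| ^ q) / (b - a) :=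
          setIntegral_mono_on (hrq_int t b (Icc_subset_Icc h1 le_rfl) h2) hφc.integrableOn_Ioc
            measurableSet_Ioc (fun s hs => hconvb s ⟨h1.trans hs.1.le, hs.2⟩)
      _ = ∫ s in t..b, ((b - s) * |f' a| ^ q + (s - a) * |f' b| ^ q) / (b - a) :=
          (intervalIntegral.integral_of_le h2).symm
      _ = _ := hPhi2 t
  -- step 2
  have step2 : |f a * (∫ s in a..x, g s) + f b * (∫ s in x..b, g s) - ∫ s in a..b, f s * g s|
      ≤ M * (∫ t in a..x, |f a - f t|) + M * (∫ t in x..b, |f b - f t|) := by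
    rw [key]
    refine (abs_add_le _ _).trans (add_le_add ?_ ?_)
    · calc |∫ t in a..x, (f a - f t) * g t|
          ≤ ∫ t in a..x, |(f a - f t) * g t| := intervalIntegral.abs_integral_le_integral_abs hax
        _ ≤ ∫ t in a..x, M * |f a - f t| := intervalIntegral.integral_mono_on hax
            (cint a x subax hax _ (((continuousOn_const.sub hfc).mul hg).abs))
            (cint a x subax hax _ (continuousOn_const.mul (continuousOn_const.sub hfc).abs))
            (fun t ht => by
              rw [abs_mul, mul_comm]
              exact mul_le_mul_of_nonneg_right (hMb t (subax ht)) (abs_nonneg _))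
        _ = M * ∫ t in a..x, |f a - f t| := intervalIntegral.integral_const_mul _ _
    · calc |∫ t in x..b, (f b - f t) * g t|
          ≤ ∫ t in x..b, |(f b - f t) * g t| := intervalIntegral.abs_integral_le_integral_abs hxb
        _ ≤ ∫ t in x..b, M * |f b - f t| := intervalIntegral.integral_mono_on hxb
            (cint x b subxb hxb _ (((continuousOn_const.sub hfc).mul hg).abs))
            (cint x b subxb hxb _ (continuousOn_const.mul (continuousOn_const.sub hfc).abs))
            (fun t ht => by
              rw [abs_mul, mul_comm]
              exact mul_le_mul_of_nonneg_right (hMb t (subxb ht)) (abs_nonneg _))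
        _ = M * ∫ t in x..b, |f b - f t| := intervalIntegral.integral_const_mul _ _
  rcases eq_or_lt_of_le hq with hq1 | hq1
  · -- q = 1
    subst hq1
    have hst1 : (∫ t in a..x, |f a - f t|)
        ≤ ∫ t in a..x, ((t - a) * (2*b - a - t) * |f' a| ^ (1:ℝ) + (t - a)^2 * |f' b| ^ (1:ℝ)) / (2*(b - a)) := by
      refine intervalIntegral.integral_mono_on hax
        (cint a x subax hax _ ((continuousOn_const.sub hfc).abs))
        ((Continuous.intervalIntegrable (((((continuous_id.sub continuous_const).mul (continuous_const.sub continuous_id)).mul continuous_const).add (((continuous_id.sub continuous_const).pow 2).mul continuous_const)).div_const _) _ _)) (fun t ht => ?_)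
      refine (habs1 t (subax ht)).trans ?_
      have h := hIq1 t ht.1 (ht.2.trans hxb)
      simpa [Real.rpow_one] using h
    have hst2 : (∫ t in x..b, |f b - f t|)
        ≤ ∫ t in x..b, ((b - t)^2 * |f' a| ^ (1:ℝ) + (b - t) * (b + t - 2*a) * |f' b| ^ (1:ℝ)) / (2*(b - a)) := by
      refine intervalIntegral.integral_mono_on hxb
        (cint x b subxb hxb _ ((continuousOn_const.sub hfc).abs))
        ((Continuous.intervalIntegrable (((((continuous_const.sub continuous_id).pow 2).mul continuous_const).add ((((continuous_const.sub continuous_id)).mul (((continuous_const.add continuous_id)).sub continuous_const)).mul continuous_const)).div_const _) _ _)) (fun t ht => ?_)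
      refine (habs2 t (subxb ht)).trans ?_
      have h := hIq2 t (hax.trans ht.1) ht.2
      simpa [Real.rpow_one] using h
    have e0 : ((((x - a) ^ 2 + (b - x) ^ 2) / 2 : ℝ)) ^ (((1:ℝ) - 1) / 1) = 1 := by
      norm_num
    have e1 : ∀ y : ℝ, y ^ ((1:ℝ)/1) = y := fun y => by
      rw [show ((1:ℝ)/1) = 1 by norm_num, Real.rpow_one]
    calc |f a * (∫ s in a..x, g s) + f b * (∫ s in x..b, g s) - ∫ s in a..b, f s * g s|
        ≤ M * (∫ t in a..x, |f a - f t|) + M * (∫ t in x..b, |f b - f t|) := step2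
      _ ≤ M * (∫ t in a..x, ((t - a) * (2*b - a - t) * |f' a| ^ (1:ℝ) + (t - a)^2 * |f' b| ^ (1:ℝ)) / (2*(b - a)))
          + M * (∫ t in x..b, ((b - t)^2 * |f' a| ^ (1:ℝ) + (b - t) * (b + t - 2*a) * |f' b| ^ (1:ℝ)) / (2*(b - a))) :=
          add_le_add (mul_le_mul_of_nonneg_left hst1 hM0) (mul_le_mul_of_nonneg_left hst2 hM0)
      _ = M * ((((x - a)^2 * (3*b - x - 2*a) * |f' a| ^ (1:ℝ) + (x - a)^3 * |f' b| ^ (1:ℝ)) / (6*(b - a)))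
          + (((b - x)^3 * |f' a| ^ (1:ℝ) + (b - x)^2 * (2*b + x - 3*a) * |f' b| ^ (1:ℝ)) / (6*(b - a)))) := by
          rw [hT1, hT2]; ring
      _ = M * (((x - a) ^ 2 + (b - x) ^ 2) / 2) ^ (((1:ℝ) - 1) / 1) *
          (((x - a) ^ 2 * (3 * b - x - 2 * a) + (b - x) ^ 3) / (6 * (b - a)) * |f' a| ^ (1:ℝ)
            + ((x - a) ^ 3 + (b - x) ^ 2 * (2 * b + x - 3 * a)) / (6 * (b - a)) * |f' b| ^ (1:ℝ))
            ^ ((1:ℝ) / 1) := by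
          rw [e0, e1]; ring
  · -- 1 < q
    have hpq : (Real.conjExponent q).HolderConjugate q :=
      (Real.HolderConjugate.conjExponent hq1).symm
    set p := Real.conjExponent q with hpdef
    have hp0 : (0:ℝ) < p := hpq.pos
    have hip : (1:ℝ)/p = (q - 1)/q := by
      rw [show p = q/(q-1) from rfl, one_div_div]
    have hcont1 : Continuous (fun t : ℝ => (t - a) ^ ((1:ℝ)/p)) :=
      (continuous_id.sub continuous_const).rpow_const (fun y => Or.inr (by positivity))
    have hcont2 : Continuous (fun t : ℝ =>
        (((t - a) * (2*b - a - t) * |f' a| ^ q + (t - a)^2 * |f' b| ^ q) / (2*(b - a))) ^ ((1:ℝ)/q)) :=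
      Continuous.rpow_const (((((continuous_id.sub continuous_const).mul (continuous_const.sub continuous_id)).mul continuous_const).add (((continuous_id.sub continuous_const).pow 2).mul continuous_const)).div_const _) (fun y => Or.inr (by positivity))
    have hcont1' : Continuous (fun t : ℝ => (b - t) ^ ((1:ℝ)/p)) :=
      (continuous_const.sub continuous_id).rpow_const (fun y => Or.inr (by positivity))
    have hcont2' : Continuous (fun t : ℝ =>
        (((b - t)^2 * |f' a| ^ q + (b - t) * (b + t - 2*a) * |f' b| ^ q) / (2*(b - a))) ^ ((1:ℝ)/q)) :=
      Continuous.rpow_const (((((continuous_const.sub continuous_id).pow 2).mul continuous_const).add ((((continuous_const.sub continuous_id)).mul (((continuous_const.add continuous_id)).sub continuous_const)).mul continuous_const)).div_const _) (fun y => Or.inr (by positivity))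
    -- pointwise Hölder
    have hH1 : ∀ t, a ≤ t → t ≤ b → (∫ s in Ioc a t, |f' s|)
        ≤ (t - a) ^ ((1:ℝ)/p) *
          (((t - a) * (2*b - a - t) * |f' a| ^ q + (t - a)^2 * |f' b| ^ q) / (2*(b - a))) ^ ((1:ℝ)/q) := by
      intro t h1 h2
      haveI : IsFiniteMeasure (volume.restrict (Ioc a t)) :=
        ⟨by rw [Measure.restrict_apply_univ]; exact measure_Ioc_lt_top⟩
      have haesm : AEStronglyMeasurable f' (volume.restrict (Ioc a t)) :=
        (hf'm a t (Icc_subset_Icc le_rfl h2) h1).aestronglyMeasurable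
      have hmem1 : MemLp (fun _ : ℝ => (1:ℝ)) (ENNReal.ofReal p) (volume.restrict (Ioc a t)) :=
        memLp_const 1
      have hmem2 : MemLp (fun s => |f' s|) (ENNReal.ofReal q) (volume.restrict (Ioc a t)) := by
        refine MemLp.of_bound (continuous_abs.comp_aestronglyMeasurable haesm)
          ((max (|f' a| ^ q) (|f' b| ^ q)) ^ (1/q)) ?_
        refine (ae_restrict_iff' measurableSet_Ioc).2 (ae_of_all _ fun s hs => ?_)
        rw [Real.norm_eq_abs, abs_abs]
        exact hDb s ⟨hs.1.le, hs.2.trans h2⟩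
      have H := MeasureTheory.integral_mul_le_Lp_mul_Lq_of_nonneg hpq
        (ae_of_all _ fun s => (zero_le_one : (0:ℝ) ≤ 1))
        (ae_of_all _ fun s => abs_nonneg (f' s)) hmem1 hmem2
      simp only [one_mul, Real.one_rpow] at H
      have hvol : (∫ _ in Ioc a t, (1:ℝ)) = t - a := by
        rw [setIntegral_const, Real.volume_real_Ioc_of_le h1, smul_eq_mul, mul_one]
      rw [hvol] at H
      refine H.trans ?_
      refine mul_le_mul_of_nonneg_left ?_ (Real.rpow_nonneg (by linarith) _)
      exact Real.rpow_le_rpow (integral_nonneg fun s => Real.rpow_nonneg (abs_nonneg _) q)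
        (hIq1 t h1 h2) (by positivity)
    have hH2 : ∀ t, a ≤ t → t ≤ b → (∫ s in Ioc t b, |f' s|)
        ≤ (b - t) ^ ((1:ℝ)/p) *
          (((b - t)^2 * |f' a| ^ q + (b - t) * (b + t - 2*a) * |f' b| ^ q) / (2*(b - a))) ^ ((1:ℝ)/q) := by
      intro t h1 h2
      haveI : IsFiniteMeasure (volume.restrict (Ioc t b)) :=
        ⟨by rw [Measure.restrict_apply_univ]; exact measure_Ioc_lt_top⟩
      have haesm : AEStronglyMeasurable f' (volume.restrict (Ioc t b)) :=
        (hf'm t b (Icc_subset_Icc h1 le_rfl) h2).aestronglyMeasurable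
      have hmem1 : MemLp (fun _ : ℝ => (1:ℝ)) (ENNReal.ofReal p) (volume.restrict (Ioc t b)) :=
        memLp_const 1
      have hmem2 : MemLp (fun s => |f' s|) (ENNReal.ofReal q) (volume.restrict (Ioc t b)) := by
        refine MemLp.of_bound (continuous_abs.comp_aestronglyMeasurable haesm)
          ((max (|f' a| ^ q) (|f' b| ^ q)) ^ (1/q)) ?_
        refine (ae_restrict_iff' measurableSet_Ioc).2 (ae_of_all _ fun s hs => ?_)
        rw [Real.norm_eq_abs, abs_abs]
        exact hDb s ⟨h1.trans hs.1.le, hs.2⟩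
      have H := MeasureTheory.integral_mul_le_Lp_mul_Lq_of_nonneg hpq
        (ae_of_all _ fun s => (zero_le_one : (0:ℝ) ≤ 1))
        (ae_of_all _ fun s => abs_nonneg (f' s)) hmem1 hmem2
      simp only [one_mul, Real.one_rpow] at H
      have hvol : (∫ _ in Ioc t b, (1:ℝ)) = b - t := by
        rw [setIntegral_const, Real.volume_real_Ioc_of_le h2, smul_eq_mul, mul_one]
      rw [hvol] at H
      refine H.trans ?_
      refine mul_le_mul_of_nonneg_left ?_ (Real.rpow_nonneg (by linarith) _)
      exact Real.rpow_le_rpow (integral_nonneg fun s => Real.rpow_nonneg (abs_nonneg _) q)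
        (hIq2 t h1 h2) (by positivity)
    -- integral Hölder
    have hJ1 : (∫ t in a..x, ((t - a) ^ ((1:ℝ)/p) *
        (((t - a) * (2*b - a - t) * |f' a| ^ q + (t - a)^2 * |f' b| ^ q) / (2*(b - a))) ^ ((1:ℝ)/q)))
        ≤ ((x - a)^2/2) ^ ((1:ℝ)/p) *
          (((x - a)^2 * (3*b - x - 2*a) * |f' a| ^ q + (x - a)^3 * |f' b| ^ q) / (6*(b - a))) ^ ((1:ℝ)/q) := by
      haveI : IsFiniteMeasure (volume.restrict (Ioc a x)) :=
        ⟨by rw [Measure.restrict_apply_univ]; exact measure_Ioc_lt_top⟩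
      obtain ⟨C1, hC1⟩ := (isCompact_Icc (a := a) (b := x)).exists_bound_of_continuousOn
        hcont1.continuousOn
      obtain ⟨C2, hC2⟩ := (isCompact_Icc (a := a) (b := x)).exists_bound_of_continuousOn
        hcont2.continuousOn
      have hm1 : MemLp (fun t : ℝ => (t - a) ^ ((1:ℝ)/p)) (ENNReal.ofReal p)
          (volume.restrict (Ioc a x)) :=
        MemLp.of_bound hcont1.aestronglyMeasurable C1
          ((ae_restrict_iff' measurableSet_Ioc).2
            (ae_of_all _ fun t ht => hC1 t (Ioc_subset_Icc_self ht)))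
      have hm2 : MemLp (fun t : ℝ =>
          (((t - a) * (2*b - a - t) * |f' a| ^ q + (t - a)^2 * |f' b| ^ q) / (2*(b - a))) ^ ((1:ℝ)/q))
          (ENNReal.ofReal q) (volume.restrict (Ioc a x)) :=
        MemLp.of_bound hcont2.aestronglyMeasurable C2
          ((ae_restrict_iff' measurableSet_Ioc).2
            (ae_of_all _ fun t ht => hC2 t (Ioc_subset_Icc_self ht)))
      have H := MeasureTheory.integral_mul_le_Lp_mul_Lq_of_nonneg hpq
        ((ae_restrict_iff' measurableSet_Ioc).2 (ae_of_all _ fun t ht =>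
          Real.rpow_nonneg (by linarith [ht.1] : (0:ℝ) ≤ t - a) _))
        ((ae_restrict_iff' measurableSet_Ioc).2 (ae_of_all _ fun t ht =>
          Real.rpow_nonneg (hPhi1nn t ⟨ht.1.le, ht.2.trans hxb⟩) _)) hm1 hm2
      have e1 : (∫ t in Ioc a x, ((t - a) ^ ((1:ℝ)/p)) ^ p) = (x - a)^2/2 := by
        rw [setIntegral_congr_fun measurableSet_Ioc (g := fun t => t - a) (fun t ht => by
          rw [← Real.rpow_mul (by linarith [ht.1] : (0:ℝ) ≤ t - a), one_div_mul_cancel hpq.ne_zero,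
            Real.rpow_one]), hS1]
      have e2 : (∫ t in Ioc a x, ((((t - a) * (2*b - a - t) * |f' a| ^ q + (t - a)^2 * |f' b| ^ q)
          / (2*(b - a))) ^ ((1:ℝ)/q)) ^ q)
          = ((x - a)^2 * (3*b - x - 2*a) * |f' a| ^ q + (x - a)^3 * |f' b| ^ q) / (6*(b - a)) := by
        rw [setIntegral_congr_fun measurableSet_Ioc
          (g := fun t => ((t - a) * (2*b - a - t) * |f' a| ^ q + (t - a)^2 * |f' b| ^ q) / (2*(b - a)))
          (fun t ht => by
            rw [← Real.rpow_mul (hPhi1nn t ⟨ht.1.le, ht.2.trans hxb⟩),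
              one_div_mul_cancel hpq.symm.ne_zero, Real.rpow_one]),
          ← intervalIntegral.integral_of_le hax, hT1]
      rw [e1, e2] at H
      rw [intervalIntegral.integral_of_le hax]
      exact H
    have hJ2 : (∫ t in x..b, ((b - t) ^ ((1:ℝ)/p) *
        (((b - t)^2 * |f' a| ^ q + (b - t) * (b + t - 2*a) * |f' b| ^ q) / (2*(b - a))) ^ ((1:ℝ)/q)))
        ≤ ((b - x)^2/2) ^ ((1:ℝ)/p) *
          (((b - x)^3 * |f' a| ^ q + (b - x)^2 * (2*b + x - 3*a) * |f' b| ^ q) / (6*(b - a))) ^ ((1:ℝ)/q) := by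
      haveI : IsFiniteMeasure (volume.restrict (Ioc x b)) :=
        ⟨by rw [Measure.restrict_apply_univ]; exact measure_Ioc_lt_top⟩
      obtain ⟨C1, hC1⟩ := (isCompact_Icc (a := x) (b := b)).exists_bound_of_continuousOn
        hcont1'.continuousOn
      obtain ⟨C2, hC2⟩ := (isCompact_Icc (a := x) (b := b)).exists_bound_of_continuousOn
        hcont2'.continuousOn
      have hm1 : MemLp (fun t : ℝ => (b - t) ^ ((1:ℝ)/p)) (ENNReal.ofReal p)
          (volume.restrict (Ioc x b)) :=
        MemLp.of_bound hcont1'.aestronglyMeasurable C1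
          ((ae_restrict_iff' measurableSet_Ioc).2
            (ae_of_all _ fun t ht => hC1 t (Ioc_subset_Icc_self ht)))
      have hm2 : MemLp (fun t : ℝ =>
          (((b - t)^2 * |f' a| ^ q + (b - t) * (b + t - 2*a) * |f' b| ^ q) / (2*(b - a))) ^ ((1:ℝ)/q))
          (ENNReal.ofReal q) (volume.restrict (Ioc x b)) :=
        MemLp.of_bound hcont2'.aestronglyMeasurable C2
          ((ae_restrict_iff' measurableSet_Ioc).2
            (ae_of_all _ fun t ht => hC2 t (Ioc_subset_Icc_self ht)))
      have H := MeasureTheory.integral_mul_le_Lp_mul_Lq_of_nonneg hpq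
        ((ae_restrict_iff' measurableSet_Ioc).2 (ae_of_all _ fun t ht =>
          Real.rpow_nonneg (by linarith [ht.2] : (0:ℝ) ≤ b - t) _))
        ((ae_restrict_iff' measurableSet_Ioc).2 (ae_of_all _ fun t ht =>
          Real.rpow_nonneg (hPhi2nn t ⟨hax.trans ht.1.le, ht.2⟩) _)) hm1 hm2
      have e1 : (∫ t in Ioc x b, ((b - t) ^ ((1:ℝ)/p)) ^ p) = (b - x)^2/2 := by
        rw [setIntegral_congr_fun measurableSet_Ioc (g := fun t => b - t) (fun t ht => by
          rw [← Real.rpow_mul (by linarith [ht.2] : (0:ℝ) ≤ b - t), one_div_mul_cancel hpq.ne_zero,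
            Real.rpow_one]), hS2]
      have e2 : (∫ t in Ioc x b, ((((b - t)^2 * |f' a| ^ q + (b - t) * (b + t - 2*a) * |f' b| ^ q)
          / (2*(b - a))) ^ ((1:ℝ)/q)) ^ q)
          = ((b - x)^3 * |f' a| ^ q + (b - x)^2 * (2*b + x - 3*a) * |f' b| ^ q) / (6*(b - a)) := by
        rw [setIntegral_congr_fun measurableSet_Ioc
          (g := fun t => ((b - t)^2 * |f' a| ^ q + (b - t) * (b + t - 2*a) * |f' b| ^ q) / (2*(b - a)))
          (fun t ht => by
            rw [← Real.rpow_mul (hPhi2nn t ⟨hax.trans ht.1.le, ht.2⟩),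
              one_div_mul_cancel hpq.symm.ne_zero, Real.rpow_one]),
          ← intervalIntegral.integral_of_le hxb, hT2]
      rw [e1, e2] at H
      rw [intervalIntegral.integral_of_le hxb]
      exact H
    -- monotonicity to insert pointwise bounds
    have hst1 : (∫ t in a..x, |f a - f t|) ≤ ∫ t in a..x, ((t - a) ^ ((1:ℝ)/p) *
        (((t - a) * (2*b - a - t) * |f' a| ^ q + (t - a)^2 * |f' b| ^ q) / (2*(b - a))) ^ ((1:ℝ)/q)) := by
      refine intervalIntegral.integral_mono_on hax
        (cint a x subax hax _ ((continuousOn_const.sub hfc).abs))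
        ((hcont1.mul hcont2).intervalIntegrable _ _) (fun t ht => ?_)
      exact (habs1 t (subax ht)).trans (hH1 t ht.1 (ht.2.trans hxb))
    have hst2 : (∫ t in x..b, |f b - f t|) ≤ ∫ t in x..b, ((b - t) ^ ((1:ℝ)/p) *
        (((b - t)^2 * |f' a| ^ q + (b - t) * (b + t - 2*a) * |f' b| ^ q) / (2*(b - a))) ^ ((1:ℝ)/q)) := by
      refine intervalIntegral.integral_mono_on hxb
        (cint x b subxb hxb _ ((continuousOn_const.sub hfc).abs))
        ((hcont1'.mul hcont2').intervalIntegrable _ _) (fun t ht => ?_)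
      exact (habs2 t (subxb ht)).trans (hH2 t (hax.trans ht.1) ht.2)
    -- nonnegativities for twoHolder
    have hT1nn : (0:ℝ) ≤ ((x - a)^2 * (3*b - x - 2*a) * |f' a| ^ q + (x - a)^3 * |f' b| ^ q) / (6*(b - a)) := by
      have h1 : (0:ℝ) ≤ 3*b - x - 2*a := by linarith
      have h2 : (0:ℝ) ≤ x - a := by linarith
      have hA0 : 0 ≤ |f' a| ^ q := Real.rpow_nonneg (abs_nonneg _) q
      have hB0 : 0 ≤ |f' b| ^ q := Real.rpow_nonneg (abs_nonneg _) q
      positivity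
    have hT2nn : (0:ℝ) ≤ ((b - x)^3 * |f' a| ^ q + (b - x)^2 * (2*b + x - 3*a) * |f' b| ^ q) / (6*(b - a)) := by
      have h1 : (0:ℝ) ≤ 2*b + x - 3*a := by linarith
      have h2 : (0:ℝ) ≤ b - x := by linarith
      have hA0 : 0 ≤ |f' a| ^ q := Real.rpow_nonneg (abs_nonneg _) q
      have hB0 : 0 ≤ |f' b| ^ q := Real.rpow_nonneg (abs_nonneg _) q
      positivity
    have hdisc := twoHolder hpq (by positivity : (0:ℝ) ≤ (x - a)^2/2)
      (by positivity : (0:ℝ) ≤ (b - x)^2/2) hT1nn hT2nn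
    calc |f a * (∫ s in a..x, g s) + f b * (∫ s in x..b, g s) - ∫ s in a..b, f s * g s|
        ≤ M * (∫ t in a..x, |f a - f t|) + M * (∫ t in x..b, |f b - f t|) := step2
      _ ≤ M * (((x - a)^2/2) ^ ((1:ℝ)/p) *
            (((x - a)^2 * (3*b - x - 2*a) * |f' a| ^ q + (x - a)^3 * |f' b| ^ q) / (6*(b - a))) ^ ((1:ℝ)/q))
          + M * (((b - x)^2/2) ^ ((1:ℝ)/p) *
            (((b - x)^3 * |f' a| ^ q + (b - x)^2 * (2*b + x - 3*a) * |f' b| ^ q) / (6*(b - a))) ^ ((1:ℝ)/q)) :=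
          add_le_add (mul_le_mul_of_nonneg_left (hst1.trans hJ1) hM0)
            (mul_le_mul_of_nonneg_left (hst2.trans hJ2) hM0)
      _ ≤ M * (((x - a)^2/2 + (b - x)^2/2) ^ ((1:ℝ)/p) *
            ((((x - a)^2 * (3*b - x - 2*a) * |f' a| ^ q + (x - a)^3 * |f' b| ^ q) / (6*(b - a)))
              + (((b - x)^3 * |f' a| ^ q + (b - x)^2 * (2*b + x - 3*a) * |f' b| ^ q) / (6*(b - a)))) ^ ((1:ℝ)/q)) := by
          rw [← mul_add]
          exact mul_le_mul_of_nonneg_left hdisc hM0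
      _ = M * (((x - a) ^ 2 + (b - x) ^ 2) / 2) ^ ((q - 1) / q) *
          (((x - a) ^ 2 * (3 * b - x - 2 * a) + (b - x) ^ 3) / (6 * (b - a)) * |f' a| ^ q
            + ((x - a) ^ 3 + (b - x) ^ 2 * (2 * b + x - 3 * a)) / (6 * (b - a)) * |f' b| ^ q)
            ^ ((1:ℝ) / q) := by
          rw [show (x - a)^2/2 + (b - x)^2/2 = ((x - a) ^ 2 + (b - x) ^ 2) / 2 by ring,
            show (((x - a)^2 * (3*b - x - 2*a) * |f' a| ^ q + (x - a)^3 * |f' b| ^ q) / (6*(b - a)))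
              + (((b - x)^3 * |f' a| ^ q + (b - x)^2 * (2*b + x - 3*a) * |f' b| ^ q) / (6*(b - a)))
              = ((x - a) ^ 2 * (3 * b - x - 2 * a) + (b - x) ^ 3) / (6 * (b - a)) * |f' a| ^ q
                + ((x - a) ^ 3 + (b - x) ^ 2 * (2 * b + x - 3 * a)) / (6 * (b - a)) * |f' b| ^ q by ring,
            hip]
          ring
end

section
/- Let f be differentiable on an open interval containing [a,b] with a < b, f' ∈ L[a,b], q ≥ 1, |f'|^q convex on [a,b], and g : [a,b] → ℝ continuous and symmetric about (a+b)/2 (i.e., g(a+b−s) = g(s)). Then |((f(a)+f(b))/2)·∫_a^b g(s) ds − ∫_a^b f(s)g(s) ds| ≤ ‖g‖_∞ · ((b−a)²/4) · [(|f'(a)|^q + |f'(b)|^q)/2]^{1/q}. -/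
open MeasureTheory Set

private lemma aux_mean {A B q : ℝ} (hA : 0 ≤ A) (hB : 0 ≤ B) (hq : 1 ≤ q) :
    A + B ≤ 2 * ((A ^ q + B ^ q) / 2) ^ (1 / q) := by
  have h := Real.arith_mean_le_rpow_mean (Finset.univ : Finset (Fin 2))
    ![1/2, 1/2] ![A, B] (by intro i _; fin_cases i <;> norm_num)
    (by simp [Fin.sum_univ_two]; norm_num)
    (by intro i _; fin_cases i <;> simpa) hq
  simp only [Fin.sum_univ_two, Matrix.cons_val_zero, Matrix.cons_val_one, Matrix.head_cons] at h
  have heq : 1/2 * A ^ q + 1/2 * B ^ q = (A ^ q + B ^ q) / 2 := by ring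
  rw [heq] at h
  linarith

set_option maxHeartbeats 1000000 in
theorem stmt_4 (f f' g : ℝ → ℝ) (a b q : ℝ) (hab : a < b) (hq : 1 ≤ q)
    (I : Set ℝ) (hI : IsOpen I) (hIab : Icc a b ⊆ I)
    (hf : ∀ t ∈ I, HasDerivAt f (f' t) t)
    (hf' : IntervalIntegrable f' volume a b)
    (hconv : ConvexOn ℝ (Icc a b) (fun t => |f' t| ^ q))
    (hg : ContinuousOn g (Icc a b))
    (hsym : ∀ s ∈ Icc a b, g (a + b - s) = g s) :
    |(f a + f b) / 2 * (∫ s in a..b, g s) - ∫ s in a..b, f s * g s|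
      ≤ sSup ((fun t => |g t|) '' Icc a b) * ((b - a) ^ 2 / 4) *
        ((|f' a| ^ q + |f' b| ^ q) / 2) ^ (1 / q) := by
  have hq0 : (0:ℝ) < q := lt_of_lt_of_le one_pos hq
  set G : ℝ := sSup ((fun t => |g t|) '' Icc a b) with hGdef
  set M : ℝ := ((|f' a| ^ q + |f' b| ^ q) / 2) ^ (1 / q) with hMdef
  have hM0 : 0 ≤ M := Real.rpow_nonneg (by positivity) _
  -- continuous extension of g
  set g₀ : ℝ → ℝ := fun x => g (max a (min b x)) with hg₀def
  have hmem : ∀ x : ℝ, max a (min b x) ∈ Icc a b :=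
    fun x => ⟨le_max_left _ _, max_le hab.le (min_le_left _ _)⟩
  have hg₀c : Continuous g₀ :=
    hg.comp_continuous (continuous_const.max (continuous_const.min continuous_id)) hmem
  have hEq : ∀ t ∈ Icc a b, g₀ t = g t := by
    intro t ht
    simp only [hg₀def, min_eq_right ht.2, max_eq_right ht.1]
  -- bound on g
  have hGbdd : ∀ t ∈ Icc a b, |g t| ≤ G := by
    intro t ht
    refine le_csSup ?_ ⟨t, ht, rfl⟩
    exact (isCompact_Icc.image_of_continuousOn hg.abs).bddAbove
  have hG0 : 0 ≤ G := le_trans (abs_nonneg _) (hGbdd a ⟨le_refl a, hab.le⟩)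
  -- antiderivative of g₀
  set K : ℝ → ℝ := fun s => ∫ t in a..s, g₀ t with hKdef
  have hK : ∀ s : ℝ, HasDerivAt K (g₀ s) s := by
    intro s
    exact (intervalIntegral.integral_hasStrictDerivAt_right
      (hg₀c.intervalIntegrable a s)
      (hg₀c.stronglyMeasurable.stronglyMeasurableAtFilter)
      hg₀c.continuousAt).hasDerivAt
  have hKcont : Continuous K := by
    rw [continuous_iff_continuousAt]; exact fun s => (hK s).continuousAt
  have hg₀sym : ∀ s ∈ Icc a b, g₀ (a + b - s) = g₀ s := by
    intro s hs
    have hs' : a + b - s ∈ Icc a b := ⟨by linarith [hs.2], by linarith [hs.1]⟩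
    rw [hEq _ hs', hEq _ hs, hsym s hs]
  -- key symmetry for K
  have hKadd : ∀ s ∈ Icc a b, K s + K (a + b - s) = K b := by
    intro s hs
    have h1 : (∫ x in a..s, g₀ (a + b - x)) = ∫ x in (a+b-s)..(a+b-a), g₀ x :=
      intervalIntegral.integral_comp_sub_left g₀ (a+b)
    have h2 : (∫ x in a..s, g₀ (a + b - x)) = ∫ x in a..s, g₀ x := by
      refine intervalIntegral.integral_congr ?_
      intro x hx
      rw [uIcc_of_le hs.1] at hx
      exact hg₀sym x ⟨hx.1, le_trans hx.2 hs.2⟩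
    have h3 : K (a+b-s) + (∫ x in (a+b-s)..b, g₀ x) = K b :=
      intervalIntegral.integral_add_adjacent_intervals
        (hg₀c.intervalIntegrable _ _) (hg₀c.intervalIntegrable _ _)
    have h4 : a + b - a = b := by ring
    rw [h4] at h1
    have h5 : K s = ∫ x in (a+b-s)..b, g₀ x := by
      rw [show K s = ∫ x in a..s, g₀ x from rfl, ← h2, h1]
    linarith [h5, h3]
  -- the function p
  set p : ℝ → ℝ := fun s => K s - K b / 2 with hpdef
  have hpcont : Continuous p := hKcont.sub continuous_const
  have hpsym : ∀ s ∈ Icc a b, |p (a + b - s)| = |p s| := by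
    intro s hs
    have h := hKadd s hs
    have : p (a + b - s) = -(p s) := by simp only [hpdef]; linarith
    rw [this, abs_neg]
  have hpbound : ∀ s ∈ Icc a b, |p s| ≤ G / 2 * |a + b - 2*s| := by
    intro s hs
    have hs' : a + b - s ∈ Icc a b := ⟨by linarith [hs.2], by linarith [hs.1]⟩
    have hps : p s = (∫ x in (a+b-s)..s, g₀ x) / 2 := by
      have h := hKadd s hs
      have hsub : K s - K (a+b-s) = ∫ x in (a+b-s)..s, g₀ x :=
        (intervalIntegral.integral_interval_sub_left
          (hg₀c.intervalIntegrable a s) (hg₀c.intervalIntegrable a (a+b-s)))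
      simp only [hpdef]; linarith
    have hbnd : |∫ x in (a+b-s)..s, g₀ x| ≤ G * |s - (a+b-s)| := by
      have := intervalIntegral.norm_integral_le_of_norm_le_const
        (a := a+b-s) (b := s) (C := G) (f := g₀) ?_
      · simpa using this
      intro x hx
      have hx' : x ∈ Icc a b := by
        rcases le_total (a+b-s) s with h | h
        · have := Set.uIoc_of_le h ▸ hx
          exact ⟨le_trans hs'.1 (le_of_lt this.1), le_trans this.2 hs.2⟩
        · have := Set.uIoc_of_ge h ▸ hx
          exact ⟨le_trans hs.1 (le_of_lt this.1), le_trans this.2 hs'.2⟩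
      have : |g₀ x| ≤ G := by rw [hEq x hx']; exact hGbdd x hx'
      simpa using this
    have habs : |s - (a+b-s)| = |a + b - 2*s| := by
      rw [abs_sub_comm]; ring_nf
    rw [hps, abs_div]
    rw [habs] at hbnd
    have : |(2:ℝ)| = 2 := by norm_num
    rw [this]
    linarith
  -- convexity bound
  have hfp : ∀ s ∈ Icc a b, |f' s| + |f' (a + b - s)| ≤ 2 * M := by
    intro s hs
    have hba : 0 < b - a := by linarith
    set lam : ℝ := (b - s) / (b - a) with hlam
    set mu : ℝ := (s - a) / (b - a) with hmu
    have hlam0 : 0 ≤ lam := div_nonneg (by linarith [hs.2]) hba.le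
    have hmu0 : 0 ≤ mu := div_nonneg (by linarith [hs.1]) hba.le
    have hsum : lam + mu = 1 := by
      rw [hlam, hmu]; field_simp; ring
    have hs1 : lam • a + mu • b = s := by
      simp only [smul_eq_mul, hlam, hmu]; field_simp; ring
    have hs2 : mu • a + lam • b = a + b - s := by
      simp only [smul_eq_mul, hlam, hmu]; field_simp; ring
    have hc1 := hconv.2 (Set.left_mem_Icc.2 hab.le) (Set.right_mem_Icc.2 hab.le)
      hlam0 hmu0 hsum
    have hc2 := hconv.2 (Set.left_mem_Icc.2 hab.le) (Set.right_mem_Icc.2 hab.le)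
      hmu0 hlam0 (by linarith)
    rw [hs1] at hc1
    rw [hs2] at hc2
    simp only [smul_eq_mul] at hc1 hc2
    have e1 : (lam + mu) * |f' a| ^ q = |f' a| ^ q := by rw [hsum, one_mul]
    have e2 : (lam + mu) * |f' b| ^ q = |f' b| ^ q := by rw [hsum, one_mul]
    have hφsum : |f' s| ^ q + |f' (a+b-s)| ^ q ≤ |f' a| ^ q + |f' b| ^ q := by
      linarith [hc1, hc2, e1, e2]
    have h1 := aux_mean (abs_nonneg (f' s)) (abs_nonneg (f' (a+b-s))) hq
    have h2 : ((|f' s| ^ q + |f' (a+b-s)| ^ q) / 2) ^ (1/q)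
        ≤ ((|f' a| ^ q + |f' b| ^ q) / 2) ^ (1/q) := by
      apply Real.rpow_le_rpow (by positivity) (by linarith) (by positivity)
    calc |f' s| + |f' (a+b-s)| ≤ 2 * ((|f' s| ^ q + |f' (a+b-s)| ^ q) / 2) ^ (1/q) := h1
      _ ≤ 2 * M := by rw [hMdef]; linarith
  -- replace g by g₀ in integrals
  have hgg₀ : ∀ h : ℝ → ℝ, (∫ s in a..b, h s * g s) = ∫ s in a..b, h s * g₀ s := by
    intro h
    refine intervalIntegral.integral_congr (fun x hx => ?_)
    rw [uIcc_of_le hab.le] at hx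
    rw [hEq x hx]
  have hg_int : (∫ s in a..b, g s) = ∫ s in a..b, g₀ s := by
    refine intervalIntegral.integral_congr (fun x hx => ?_)
    rw [uIcc_of_le hab.le] at hx
    rw [hEq x hx]
  -- derivative of f on uIcc
  have hfderiv : ∀ x ∈ Set.uIcc a b, HasDerivAt f (f' x) x := by
    intro x hx
    rw [uIcc_of_le hab.le] at hx
    exact hf x (hIab hx)
  -- integration by parts
  have hibp : (∫ s in a..b, f s * g₀ s)
      = f b * K b - f a * K a - ∫ s in a..b, f' s * K s := by
    refine intervalIntegral.integral_mul_deriv_eq_deriv_mul hfderiv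
      (fun x _ => hK x) hf' (hg₀c.intervalIntegrable a b)
  have hKa : K a = 0 := intervalIntegral.integral_same
  have hftc : (∫ s in a..b, f' s) = f b - f a :=
    intervalIntegral.integral_eq_sub_of_hasDerivAt hfderiv hf'
  -- the main identity
  have hfK_int : IntervalIntegrable (fun s => f' s * K s) volume a b :=
    hf'.mul_continuousOn hKcont.continuousOn
  have hfc_int : IntervalIntegrable (fun s => f' s * (K b / 2)) volume a b :=
    hf'.mul_const _
  have hfp_int : IntervalIntegrable (fun s => f' s * p s) volume a b :=
    hf'.mul_continuousOn hpcont.continuousOn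
  have hident : (f a + f b) / 2 * (∫ s in a..b, g s) - (∫ s in a..b, f s * g s)
      = ∫ s in a..b, f' s * p s := by
    rw [hg_int, hgg₀ f, hibp, hKa]
    have hsplit : (∫ s in a..b, f' s * p s)
        = (∫ s in a..b, f' s * K s) - ∫ s in a..b, f' s * (K b / 2) := by
      rw [← intervalIntegral.integral_sub hfK_int hfc_int]
      refine intervalIntegral.integral_congr (fun x _ => ?_)
      simp only [hpdef]; ring
    have hconst : (∫ s in a..b, f' s * (K b / 2)) = (f b - f a) * (K b / 2) := by
      rw [intervalIntegral.integral_mul_const, hftc]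
    rw [hsplit, hconst]
    ring
  rw [hident]
  -- bound by integral of absolute value
  set r : ℝ → ℝ := fun s => |f' s * p s| with hrdef
  have hr_int : IntervalIntegrable r volume a b := hfp_int.abs
  have habs_le : |∫ s in a..b, f' s * p s| ≤ ∫ s in a..b, r s :=
    intervalIntegral.abs_integral_le_integral_abs hab.le
  -- symmetrization
  have hrσ_int : IntervalIntegrable (fun s => r (a + b - s)) volume a b := by
    have h := hr_int.comp_sub_left (a + b)
    have h1 : a + b - a = b := by ring
    have h2 : a + b - b = a := by ring
    rw [h1, h2] at h
    exact h.symm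
  have hflip : (∫ s in a..b, r (a + b - s)) = ∫ s in a..b, r s := by
    have h := intervalIntegral.integral_comp_sub_left r (a + b) (a := a) (b := b)
    have h1 : a + b - a = b := by ring
    have h2 : a + b - b = a := by ring
    rw [h1, h2] at h
    exact h
  have hsym_int : (∫ s in a..b, r s)
      = (1/2) * ∫ s in a..b, (r s + r (a + b - s)) := by
    rw [intervalIntegral.integral_add hr_int hrσ_int, hflip]
    ring
  -- pointwise bound of symmetrized integrand
  have hw_int : IntervalIntegrable (fun s => G * M * |a + b - 2*s|) volume a b := by
    exact (continuous_const.mul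
      ((continuous_const.sub (continuous_const.mul continuous_id)).abs)).intervalIntegrable a b
  have hsum_int : IntervalIntegrable (fun s => r s + r (a + b - s)) volume a b :=
    hr_int.add hrσ_int
  have hptwise : ∀ s ∈ Icc a b, r s + r (a + b - s) ≤ G * M * |a + b - 2*s| := by
    intro s hs
    have hs' : a + b - s ∈ Icc a b := ⟨by linarith [hs.2], by linarith [hs.1]⟩
    have h1 : r s = |f' s| * |p s| := abs_mul _ _
    have h2 : r (a + b - s) = |f' (a+b-s)| * |p s| := by
      rw [hrdef]; simp only; rw [abs_mul, hpsym s hs]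
    rw [h1, h2, ← add_mul]
    calc (|f' s| + |f' (a+b-s)|) * |p s| ≤ (2 * M) * (G / 2 * |a + b - 2*s|) := by
          apply mul_le_mul (hfp s hs) (hpbound s hs) (abs_nonneg _) (by linarith)
      _ = G * M * |a + b - 2*s| := by ring
  have hmono : (∫ s in a..b, (r s + r (a + b - s)))
      ≤ ∫ s in a..b, G * M * |a + b - 2*s| := by
    apply intervalIntegral.integral_mono_on hab.le hsum_int hw_int hptwise
  -- compute the weight integral
  have hweight : (∫ s in a..b, |a + b - 2*s|) = (b - a)^2 / 2 := by
    set m : ℝ := (a + b) / 2 with hm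
    have hm1 : a ≤ m := by rw [hm]; linarith
    have hm2 : m ≤ b := by rw [hm]; linarith
    have hint1 : IntervalIntegrable (fun s : ℝ => |a + b - 2*s|) volume a m :=
      ((continuous_const.sub (continuous_const.mul continuous_id)).abs).intervalIntegrable _ _
    have hint2 : IntervalIntegrable (fun s : ℝ => |a + b - 2*s|) volume m b :=
      ((continuous_const.sub (continuous_const.mul continuous_id)).abs).intervalIntegrable _ _
    have hsplit := intervalIntegral.integral_add_adjacent_intervals hint1 hint2
    have hleft : (∫ s in a..m, |a + b - 2*s|) = ∫ s in a..m, (a + b - 2*s) := by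
      refine intervalIntegral.integral_congr (fun x hx => ?_)
      rw [uIcc_of_le hm1] at hx
      have : a + b - 2*x ≥ 0 := by
        have := hx.2; rw [hm] at this; linarith
      exact abs_of_nonneg this
    have hright : (∫ s in m..b, |a + b - 2*s|) = ∫ s in m..b, (2*s - (a + b)) := by
      refine intervalIntegral.integral_congr (fun x hx => ?_)
      rw [uIcc_of_le hm2] at hx
      have : a + b - 2*x ≤ 0 := by
        have := hx.1; rw [hm] at this; linarith
      show |a + b - 2*x| = 2*x - (a+b)
      rw [abs_of_nonpos this]; ring
    have hcomp1 : (∫ s in a..m, (a + b - 2*s)) = (b - a)^2 / 4 := by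
      have h1 : (∫ s in a..m, (a + b - 2*s))
          = (∫ s in a..m, (a + b : ℝ)) - ∫ s in a..m, 2*s :=
        intervalIntegral.integral_sub (intervalIntegrable_const (c := a+b))
          ((continuous_const.mul continuous_id).intervalIntegrable _ _)
      rw [h1]
      rw [intervalIntegral.integral_const, intervalIntegral.integral_const_mul,
        integral_id, smul_eq_mul, hm]; ring
    have hcomp2 : (∫ s in m..b, (2*s - (a + b))) = (b - a)^2 / 4 := by
      have h1 : (∫ s in m..b, (2*s - (a + b)))
          = (∫ s in m..b, 2*s) - ∫ s in m..b, (a + b : ℝ) :=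
        intervalIntegral.integral_sub ((continuous_const.mul continuous_id).intervalIntegrable _ _)
          (intervalIntegrable_const (c := a+b))
      rw [h1]
      rw [intervalIntegral.integral_const, intervalIntegral.integral_const_mul,
        integral_id, smul_eq_mul, hm]; ring
    rw [← hsplit, hleft, hright, hcomp1, hcomp2]
    ring
  have hwval : (∫ s in a..b, G * M * |a + b - 2*s|) = G * M * ((b - a)^2 / 2) := by
    rw [intervalIntegral.integral_const_mul, hweight]
  calc |∫ s in a..b, f' s * p s| ≤ ∫ s in a..b, r s := habs_le
    _ = (1/2) * ∫ s in a..b, (r s + r (a + b - s)) := hsym_int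
    _ ≤ (1/2) * (G * M * ((b - a)^2 / 2)) := by
        rw [← hwval]; linarith [hmono]
    _ = G * ((b - a)^2 / 4) * M := by ring
end

section
/- Let f be differentiable on an open interval containing [a,b] with a < b, f' ∈ L[a,b], q ≥ 1, |f'|^q convex on [a,b], and g : [a,b] → ℝ continuous. Then for all x ∈ [a,b]: |f(x)∫_a^b g − ∫_a^b fg| ≤ ‖g‖_∞ · [((x−a)² + (b−x)²)/2]^{(q−1)/q} · { [((x−a)²(3b−a−2x) + 2(b−x)³)/(6(b−a))]·|f'(a)|^q + [(2(x−a)³ + (b−x)²(b+2x−3a))/(6(b−a))]·|f'(b)|^q }^{1/q}. -/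
open MeasureTheory Set

noncomputable def myPhi (a b A B t : ℝ) : ℝ := (-(b-t)^2/2*A + (t-a)^2/2*B)/(b-a)
noncomputable def myPsi (a b A B t : ℝ) : ℝ := ((b-t)^3/6*A + (t-a)^3/6*B)/(b-a)

lemma hasDerivAt_myPhi (a b A B t : ℝ) :
    HasDerivAt (myPhi a b A B) (((b-t)*A + (t-a)*B)/(b-a)) t := by
  have h1 : HasDerivAt (fun t : ℝ => b - t) (-1) t := (hasDerivAt_id t).const_sub b
  have h2 := (hasDerivAt_id t).sub_const a
  have := (((((h1.pow 2).neg.div_const 2).mul_const A).add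
    (((h2.pow 2).div_const 2).mul_const B)).div_const (b-a))
  refine this.congr_deriv ?_
  simp only [id_eq, pow_one]
  push_cast
  ring

lemma hasDerivAt_myPsi (a b A B t : ℝ) :
    HasDerivAt (myPsi a b A B) (myPhi a b A B t) t := by
  have h1 : HasDerivAt (fun t : ℝ => b - t) (-1) t := (hasDerivAt_id t).const_sub b
  have h2 := (hasDerivAt_id t).sub_const a
  have := ((((h1.pow 3).div_const 6).mul_const A).add
    (((h2.pow 3).div_const 6).mul_const B)).div_const (b-a)
  refine this.congr_deriv ?_
  simp only [id_eq, myPhi]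
  push_cast
  ring

lemma continuous_myPhi (a b A B : ℝ) : Continuous (myPhi a b A B) := by
  unfold myPhi; fun_prop

lemma continuous_myell (a b A B : ℝ) : Continuous (fun t => ((b-t)*A + (t-a)*B)/(b-a)) := by
  fun_prop

lemma integ_myell (a b A B c d : ℝ) :
    ∫ t in c..d, ((b-t)*A + (t-a)*B)/(b-a) = myPhi a b A B d - myPhi a b A B c :=
  intervalIntegral.integral_eq_sub_of_hasDerivAt (fun t _ => hasDerivAt_myPhi a b A B t)
    ((continuous_myell a b A B).intervalIntegrable c d)

lemma integ_myPhi (a b A B c d : ℝ) :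
    ∫ t in c..d, myPhi a b A B t = myPsi a b A B d - myPsi a b A B c :=
  intervalIntegral.integral_eq_sub_of_hasDerivAt (fun t _ => hasDerivAt_myPsi a b A B t)
    ((continuous_myPhi a b A B).intervalIntegrable c d)

lemma integ_abs (a b x : ℝ) (hx1 : a ≤ x) (hx2 : x ≤ b) :
    ∫ s in a..b, |x - s| = ((x-a)^2 + (b-x)^2)/2 := by
  have hc : Continuous (fun s : ℝ => |x - s|) := (continuous_const.sub continuous_id).abs
  have hi1 : IntervalIntegrable (fun s : ℝ => |x - s|) volume a x := hc.intervalIntegrable a x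
  have hi2 : IntervalIntegrable (fun s : ℝ => |x - s|) volume x b := hc.intervalIntegrable x b
  rw [← intervalIntegral.integral_add_adjacent_intervals hi1 hi2]
  have e1 : ∫ s in a..x, |x - s| = ∫ s in a..x, (x - s) := by
    refine intervalIntegral.integral_congr fun s hs => ?_
    rw [uIcc_of_le hx1] at hs
    exact abs_of_nonneg (by linarith [hs.2])
  have e2 : ∫ s in x..b, |x - s| = ∫ s in x..b, (s - x) := by
    refine intervalIntegral.integral_congr fun s hs => ?_
    rw [uIcc_of_le hx2] at hs
    rw [abs_sub_comm]
    exact abs_of_nonneg (by linarith [hs.1])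
  rw [e1, e2,
      intervalIntegral.integral_sub intervalIntegrable_const intervalIntegral.intervalIntegrable_id,
      intervalIntegral.integral_sub intervalIntegral.intervalIntegrable_id intervalIntegrable_const]
  simp [_root_.integral_id]
  ring

lemma integ_H (a b x A B : ℝ) (hab : a < b) (hx1 : a ≤ x) (hx2 : x ≤ b) :
    ∫ s in a..b, (myPhi a b A B (s ⊔ x) - myPhi a b A B (s ⊓ x))
      = ((x - a)^2*(3*b - a - 2*x) + 2*(b - x)^3)/(6*(b-a)) * A
        + (2*(x-a)^3 + (b-x)^2*(b + 2*x - 3*a))/(6*(b-a)) * B := by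
  have hcont : Continuous (fun s => myPhi a b A B (s ⊔ x) - myPhi a b A B (s ⊓ x)) := by
    exact ((continuous_myPhi a b A B).comp (continuous_id.max continuous_const)).sub
      ((continuous_myPhi a b A B).comp (continuous_id.min continuous_const))
  rw [← intervalIntegral.integral_add_adjacent_intervals
    (hcont.intervalIntegrable a x) (hcont.intervalIntegrable x b)]
  have e1 : ∫ s in a..x, (myPhi a b A B (s ⊔ x) - myPhi a b A B (s ⊓ x))
      = ∫ s in a..x, (myPhi a b A B x - myPhi a b A B s) := by
    refine intervalIntegral.integral_congr fun s hs => ?_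
    rw [uIcc_of_le hx1] at hs
    rw [sup_eq_right.mpr hs.2, inf_eq_left.mpr hs.2]
  have e2 : ∫ s in x..b, (myPhi a b A B (s ⊔ x) - myPhi a b A B (s ⊓ x))
      = ∫ s in x..b, (myPhi a b A B s - myPhi a b A B x) := by
    refine intervalIntegral.integral_congr fun s hs => ?_
    rw [uIcc_of_le hx2] at hs
    rw [sup_eq_left.mpr hs.1, inf_eq_right.mpr hs.1]
  rw [e1, e2,
    intervalIntegral.integral_sub (intervalIntegrable_const) ((continuous_myPhi a b A B).intervalIntegrable _ _),
    intervalIntegral.integral_sub ((continuous_myPhi a b A B).intervalIntegrable _ _) (intervalIntegrable_const),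
    integ_myPhi, integ_myPhi]
  simp only [intervalIntegral.integral_const, smul_eq_mul]
  unfold myPhi myPsi
  have hba : b - a ≠ 0 := by linarith
  field_simp
  ring

lemma my_holder (u v : ℝ → ℝ) (c d q : ℝ) (hcd : c ≤ d) (hq : 1 ≤ q)
    (hu : ContinuousOn u (Icc c d)) (hv : ContinuousOn v (Icc c d))
    (hu0 : ∀ t ∈ Icc c d, 0 ≤ u t) (hv0 : ∀ t ∈ Icc c d, 0 ≤ v t) :
    ∫ t in c..d, (u t) ^ ((q-1)/q) * (v t) ^ (1/q)
      ≤ (∫ t in c..d, u t) ^ ((q-1)/q) * (∫ t in c..d, v t) ^ (1/q) := by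
  have hq0 : (0:ℝ) < q := lt_of_lt_of_le one_pos hq
  rcases eq_or_lt_of_le hq with h1 | h1
  · subst h1
    simp [Real.rpow_zero, Real.rpow_one]
  · set p : ℝ := q / (q - 1) with hp
    have hq1 : q - 1 > 0 := by linarith
    have hpq : p.HolderConjugate q := (Real.HolderConjugate.conjExponent h1).symm
    have hinvp : 1 / p = (q - 1) / q := by rw [hp]; field_simp
    haveI hμfin : IsFiniteMeasure (volume.restrict (Set.Ioc c d)) :=
      ⟨by rw [Measure.restrict_apply_univ]; exact measure_Ioc_lt_top⟩
    set μ := volume.restrict (Set.Ioc c d) with hμ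
    set F : ℝ → ℝ := fun t => u t ^ ((q-1)/q) with hF
    set G : ℝ → ℝ := fun t => v t ^ (1/q) with hG
    have hFc : ContinuousOn F (Icc c d) := hu.rpow_const (fun x hx => Or.inr (by positivity))
    have hGc : ContinuousOn G (Icc c d) := hv.rpow_const (fun x hx => Or.inr (by positivity))
    have hmem : ∀ (W : ℝ → ℝ), ContinuousOn W (Icc c d) → ∀ (r : ℝ), MemLp W (ENNReal.ofReal r) μ := by
      intro W hW r
      obtain ⟨C, hC⟩ := (isCompact_Icc).exists_bound_of_continuousOn hW
      refine MemLp.of_bound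
        ((hW.aestronglyMeasurable measurableSet_Icc).mono_measure
          (Measure.restrict_mono Ioc_subset_Icc_self le_rfl)) C ?_
      filter_upwards [ae_restrict_mem measurableSet_Ioc] with t ht
      exact hC t (Ioc_subset_Icc_self ht)
    have hae : ∀ᵐ t ∂μ, t ∈ Icc c d := by
      filter_upwards [ae_restrict_mem measurableSet_Ioc] with t ht
      exact Ioc_subset_Icc_self ht
    have hF0 : 0 ≤ᵐ[μ] F := by
      filter_upwards [hae] with t ht
      exact Real.rpow_nonneg (hu0 t ht) _
    have hG0 : 0 ≤ᵐ[μ] G := by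
      filter_upwards [hae] with t ht
      exact Real.rpow_nonneg (hv0 t ht) _
    have key := integral_mul_le_Lp_mul_Lq_of_nonneg hpq hF0 hG0
      (hmem F hFc p) (hmem G hGc q)
    have e1 : ∫ t, F t ^ p ∂μ = ∫ t, u t ∂μ := by
      refine integral_congr_ae ?_
      filter_upwards [hae] with t ht
      show (u t ^ ((q-1)/q)) ^ p = u t
      rw [← Real.rpow_mul (hu0 t ht), (by rw [hp]; field_simp : (q-1)/q * p = 1), Real.rpow_one]
    have e2 : ∫ t, G t ^ q ∂μ = ∫ t, v t ∂μ := by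
      refine integral_congr_ae ?_
      filter_upwards [hae] with t ht
      show (v t ^ (1/q)) ^ q = v t
      rw [← Real.rpow_mul (hv0 t ht), (by field_simp : 1/q * q = 1), Real.rpow_one]
    rw [e1, e2, hinvp] at key
    rw [intervalIntegral.integral_of_le hcd, intervalIntegral.integral_of_le hcd,
      intervalIntegral.integral_of_le hcd]
    exact key

theorem stmt_5 (f f' g : ℝ → ℝ) (a b q : ℝ) (hab : a < b) (hq : 1 ≤ q)
    (I : Set ℝ) (hI : IsOpen I) (hIab : Icc a b ⊆ I)
    (hf : ∀ t ∈ I, HasDerivAt f (f' t) t)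
    (hf' : IntervalIntegrable f' volume a b)
    (hconv : ConvexOn ℝ (Icc a b) (fun t => |f' t| ^ q))
    (hg : ContinuousOn g (Icc a b))
    (x : ℝ) (hx : x ∈ Icc a b) :
    |f x * (∫ s in a..b, g s) - ∫ s in a..b, f s * g s|
      ≤ sSup ((fun t => |g t|) '' Icc a b) *
        (((x - a) ^ 2 + (b - x) ^ 2) / 2) ^ ((q - 1) / q) *
        (((x - a) ^ 2 * (3 * b - a - 2 * x) + 2 * (b - x) ^ 3) / (6 * (b - a)) * |f' a| ^ q
          + (2 * (x - a) ^ 3 + (b - x) ^ 2 * (b + 2 * x - 3 * a)) / (6 * (b - a)) * |f' b| ^ q)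
          ^ (1 / q) := by
  obtain ⟨hax, hxb⟩ := hx
  have hba : (0:ℝ) < b - a := sub_pos.mpr hab
  have hq0 : (0:ℝ) < q := lt_of_lt_of_le one_pos hq
  have hq0' : q ≠ 0 := ne_of_gt hq0
  have he0 : 0 ≤ (q-1)/q := div_nonneg (by linarith) hq0.le
  have hA0 : 0 ≤ |f' a| ^ q := Real.rpow_nonneg (abs_nonneg _) q
  have hB0 : 0 ≤ |f' b| ^ q := Real.rpow_nonneg (abs_nonneg _) q
  set A := |f' a| ^ q with hA
  set B := |f' b| ^ q with hB
  set l : ℝ → ℝ := fun t => ((b-t)*A + (t-a)*B)/(b-a) with hldef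
  set Φ : ℝ → ℝ := myPhi a b A B with hΦdef
  set H : ℝ → ℝ := fun s => Φ (s ⊔ x) - Φ (s ⊓ x) with hHdef
  set u : ℝ → ℝ := fun s => |x - s| with hudef
  -- basic facts about l
  have hlc : Continuous l := continuous_myell a b A B
  have hl0 : ∀ t ∈ Icc a b, 0 ≤ l t := by
    intro t ht
    exact div_nonneg (add_nonneg (mul_nonneg (by linarith [ht.2]) hA0)
      (mul_nonneg (by linarith [ht.1]) hB0)) hba.le
  have hconvl : ∀ t ∈ Icc a b, |f' t| ^ q ≤ l t := by
    intro t ht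
    have h1 : (0:ℝ) ≤ (b - t)/(b-a) := div_nonneg (by linarith [ht.2]) hba.le
    have h2 : (0:ℝ) ≤ (t - a)/(b-a) := div_nonneg (by linarith [ht.1]) hba.le
    have hsum : (b-t)/(b-a) + (t-a)/(b-a) = 1 := by field_simp; ring
    have hc := hconv.2 (left_mem_Icc.mpr hab.le) (right_mem_Icc.mpr hab.le) h1 h2 hsum
    have harg : ((b-t)/(b-a)) • a + ((t-a)/(b-a)) • b = t := by
      simp only [smul_eq_mul]; field_simp; ring
    rw [harg] at hc
    have : l t = (b-t)/(b-a) * A + (t-a)/(b-a) * B := by rw [hldef]; ring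
    rw [this]
    simpa [smul_eq_mul] using hc
  have hptf : ∀ t ∈ Icc a b, |f' t| ≤ l t ^ (1/q) := by
    intro t ht
    have h := hconvl t ht
    have h2 := Real.rpow_le_rpow (Real.rpow_nonneg (abs_nonneg _) q) h
      (by positivity : (0:ℝ) ≤ 1/q)
    rwa [← Real.rpow_mul (abs_nonneg _), mul_one_div, div_self hq0', Real.rpow_one] at h2
  -- H
  have hΦc : Continuous Φ := continuous_myPhi a b A B
  have hHc : Continuous H := by
    rw [hHdef]
    exact (hΦc.comp (continuous_id.max continuous_const)).sub
      (hΦc.comp (continuous_id.min continuous_const))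
  have hH_int : ∀ s : ℝ, H s = ∫ t in (s ⊓ x)..(s ⊔ x), l t := by
    intro s
    rw [hHdef, hldef, hΦdef]
    exact (integ_myell a b A B (s ⊓ x) (s ⊔ x)).symm
  have hH0 : ∀ s ∈ Icc a b, 0 ≤ H s := by
    intro s hs
    rw [hH_int s]
    refine intervalIntegral.integral_nonneg inf_le_sup (fun t ht => hl0 t ?_)
    exact Icc_subset_Icc (le_inf hs.1 hax) (sup_le hs.2 hxb) ht
  -- pointwise key bound
  have hkey : ∀ s ∈ Icc a b, |f x - f s| ≤ u s ^ ((q-1)/q) * H s ^ (1/q) := by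
    intro s hs
    have hcd : s ⊓ x ≤ s ⊔ x := inf_le_sup
    have hsub : Icc (s ⊓ x) (s ⊔ x) ⊆ Icc a b :=
      Icc_subset_Icc (le_inf hs.1 hax) (sup_le hs.2 hxb)
    have husub : uIcc (s ⊓ x) (s ⊔ x) ⊆ uIcc a b := by
      rw [uIcc_of_le hab.le, uIcc_of_le hcd]; exact hsub
    have hsx : uIcc s x ⊆ Icc a b := by rw [Set.uIcc]; exact hsub
    have husub2 : uIcc s x ⊆ uIcc a b := by rw [uIcc_of_le hab.le]; exact hsx
    have hftc : f x - f s = ∫ t in s..x, f' t := by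
      rw [intervalIntegral.integral_eq_sub_of_hasDerivAt
        (fun t ht => hf t (hIab (hsx ht))) (hf'.mono_set husub2)]
    have h1 : |f x - f s| ≤ ∫ t in (s ⊓ x)..(s ⊔ x), |f' t| := by
      rw [hftc]
      rcases le_total s x with h | h
      · rw [inf_eq_left.mpr h, sup_eq_right.mpr h]
        exact intervalIntegral.abs_integral_le_integral_abs h
      · rw [inf_eq_right.mpr h, sup_eq_left.mpr h,
          intervalIntegral.integral_symm, abs_neg]
        exact intervalIntegral.abs_integral_le_integral_abs h
    have hl1qc : Continuous (fun t => l t ^ (1/q)) :=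
      hlc.rpow_const (fun t => Or.inr (by positivity))
    have h2 : ∫ t in (s ⊓ x)..(s ⊔ x), |f' t| ≤ ∫ t in (s ⊓ x)..(s ⊔ x), l t ^ (1/q) := by
      refine intervalIntegral.integral_mono_on hcd ((hf'.mono_set husub).abs)
        (hl1qc.intervalIntegrable _ _) (fun t ht => hptf t (hsub ht))
    have h3 : ∫ t in (s ⊓ x)..(s ⊔ x), l t ^ (1/q)
        ≤ (s ⊔ x - s ⊓ x) ^ ((q-1)/q) * (H s) ^ (1/q) := by
      have hh := my_holder (fun _ => 1) l (s ⊓ x) (s ⊔ x) q hcd hq continuousOn_const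
        hlc.continuousOn (fun _ _ => zero_le_one) (fun t ht => hl0 t (hsub ht))
      simp only [Real.one_rpow, one_mul] at hh
      rw [intervalIntegral.integral_const, smul_eq_mul, mul_one] at hh
      rw [hH_int s]
      exact hh
    have hdc : s ⊔ x - s ⊓ x = u s := by
      simp only [hudef]; exact max_sub_min_eq_abs s x
    calc |f x - f s| ≤ ∫ t in (s ⊓ x)..(s ⊔ x), |f' t| := h1
      _ ≤ ∫ t in (s ⊓ x)..(s ⊔ x), l t ^ (1/q) := h2
      _ ≤ (s ⊔ x - s ⊓ x) ^ ((q-1)/q) * (H s) ^ (1/q) := h3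
      _ = u s ^ ((q-1)/q) * H s ^ (1/q) := by rw [hdc]
  -- sup bound on g
  set M := sSup ((fun t => |g t|) '' Icc a b) with hMdef
  have hMle : ∀ s ∈ Icc a b, |g s| ≤ M :=
    fun s hs => le_csSup (isCompact_Icc.image_of_continuousOn hg.abs).bddAbove ⟨s, hs, rfl⟩
  have hM0 : 0 ≤ M := le_trans (abs_nonneg (g a)) (hMle a (left_mem_Icc.mpr hab.le))
  -- continuity of f
  have hfc : ContinuousOn f (Icc a b) :=
    fun t ht => ((hf t (hIab ht)).continuousAt).continuousWithinAt
  have hgint : IntervalIntegrable g volume a b :=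
    ContinuousOn.intervalIntegrable (by rw [uIcc_of_le hab.le]; exact hg)
  have hfgint : IntervalIntegrable (fun s => f s * g s) volume a b :=
    ContinuousOn.intervalIntegrable (by rw [uIcc_of_le hab.le]; exact hfc.mul hg)
  have hkey0 : f x * (∫ s in a..b, g s) - ∫ s in a..b, f s * g s
      = ∫ s in a..b, (f x - f s) * g s := by
    have : (fun s => (f x - f s) * g s) = fun s => f x * g s - f s * g s := by
      ext s; ring
    rw [this, intervalIntegral.integral_sub (hgint.const_mul (f x)) hfgint,
      intervalIntegral.integral_const_mul]
  -- ψ continuity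
  have huc : Continuous u := by rw [hudef]; exact (continuous_const.sub continuous_id).abs
  have hψc : Continuous (fun s => u s ^ ((q-1)/q) * H s ^ (1/q)) :=
    (huc.rpow_const (fun s => Or.inr he0)).mul
      (hHc.rpow_const (fun s => Or.inr (by positivity)))
  have houter := my_holder u H a b q hab.le hq huc.continuousOn hHc.continuousOn
    (fun s _ => abs_nonneg _) hH0
  have hC1 : ∫ s in a..b, u s = ((x-a)^2 + (b-x)^2)/2 := by
    rw [hudef]; exact integ_abs a b x hax hxb
  have hS : ∫ s in a..b, H s
      = ((x - a)^2*(3*b - a - 2*x) + 2*(b - x)^3)/(6*(b-a)) * A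
        + (2*(x-a)^3 + (b-x)^2*(b + 2*x - 3*a))/(6*(b-a)) * B := by
    rw [hHdef, hΦdef]; exact integ_H a b x A B hab hax hxb
  calc |f x * (∫ s in a..b, g s) - ∫ s in a..b, f s * g s|
      = |∫ s in a..b, (f x - f s) * g s| := by rw [hkey0]
    _ ≤ ∫ s in a..b, |(f x - f s) * g s| :=
        intervalIntegral.abs_integral_le_integral_abs hab.le
    _ ≤ ∫ s in a..b, M * (u s ^ ((q-1)/q) * H s ^ (1/q)) := by
        refine intervalIntegral.integral_mono_on hab.le
          (ContinuousOn.intervalIntegrable (by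
            rw [uIcc_of_le hab.le]
            exact ((continuousOn_const.sub hfc).mul hg).abs))
          ((continuous_const.mul hψc).intervalIntegrable _ _) (fun s hs => ?_)
        rw [abs_mul]
        have hψ0 : 0 ≤ u s ^ ((q-1)/q) * H s ^ (1/q) :=
          mul_nonneg (Real.rpow_nonneg (abs_nonneg _) _) (Real.rpow_nonneg (hH0 s hs) _)
        calc |f x - f s| * |g s| ≤ (u s ^ ((q-1)/q) * H s ^ (1/q)) * M :=
              mul_le_mul (hkey s hs) (hMle s hs) (abs_nonneg _) hψ0
          _ = M * (u s ^ ((q-1)/q) * H s ^ (1/q)) := mul_comm _ _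
    _ = M * ∫ s in a..b, u s ^ ((q-1)/q) * H s ^ (1/q) :=
        intervalIntegral.integral_const_mul _ _
    _ ≤ M * ((∫ s in a..b, u s) ^ ((q-1)/q) * (∫ s in a..b, H s) ^ (1/q)) :=
        mul_le_mul_of_nonneg_left houter hM0
    _ = _ := by rw [hC1, hS, mul_assoc]
end

section
/- Let f be differentiable on an open interval containing [a,b] with a < b, f' ∈ L[a,b], q ≥ 1, |f'|^q convex on [a,b], and g : [a,b] → ℝ continuous. Then |f((a+b)/2)·∫_a^b g(s) ds − ∫_a^b f(s)g(s) ds| ≤ ‖g‖_∞ · ((b−a)²/4) · [(|f'(a)|^q + |f'(b)|^q)/2]^{1/q}. -/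
open MeasureTheory Set

private lemma bern_aux {p x c : ℝ} (hp0 : 0 < p) (hp1 : p ≤ 1) (hx : 0 ≤ x) (hc : 0 < c) :
    x ^ p ≤ c ^ p + p * c ^ (p - 1) * (x - c) := by
  have hy : (0:ℝ) ≤ x / c := div_nonneg hx hc.le
  have hs : (-1:ℝ) ≤ x / c - 1 := by linarith
  have h := rpow_one_add_le_one_add_mul_self hs hp0.le hp1
  have he : (1:ℝ) + (x / c - 1) = x / c := by ring
  rw [he] at h
  have hxp : x ^ p = c ^ p * (x / c) ^ p := by
    rw [← Real.mul_rpow hc.le hy, mul_div_cancel₀ _ hc.ne']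
  have hcp : (0:ℝ) ≤ c ^ p := Real.rpow_nonneg hc.le p
  have h2 : x ^ p ≤ c ^ p * (1 + p * (x / c - 1)) := by
    rw [hxp]; exact mul_le_mul_of_nonneg_left h hcp
  have hsub : c ^ (p - 1) = c ^ p / c := by
    rw [Real.rpow_sub hc, Real.rpow_one]
  calc x ^ p ≤ c ^ p * (1 + p * (x / c - 1)) := h2
    _ = c ^ p + p * (c ^ p / c) * (x - c) := by field_simp
    _ = c ^ p + p * c ^ (p - 1) * (x - c) := by rw [hsub]

private lemma cubic_int (x y c0 c1 c2 : ℝ) :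
    ∫ s in x..y, (c0 + c1 * s + c2 * s ^ 2) =
      (c0 * y + c1 * y ^ 2 / 2 + c2 * y ^ 3 / 3) - (c0 * x + c1 * x ^ 2 / 2 + c2 * x ^ 3 / 3) := by
  have hd : ∀ s : ℝ, HasDerivAt (fun s : ℝ => c0 * s + c1 * s ^ 2 / 2 + c2 * s ^ 3 / 3)
      (c0 + c1 * s + c2 * s ^ 2) s := by
    intro s
    have h1 : HasDerivAt (fun s : ℝ => c0 * s) c0 s := by
      simpa using (hasDerivAt_id s).const_mul c0
    have h2 : HasDerivAt (fun s : ℝ => c1 * s ^ 2 / 2) (c1 * s) s := by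
      have := ((hasDerivAt_pow 2 s).const_mul c1).div_const 2
      exact this.congr_deriv (by push_cast; ring)
    have h3 : HasDerivAt (fun s : ℝ => c2 * s ^ 3 / 3) (c2 * s ^ 2) s := by
      have := ((hasDerivAt_pow 3 s).const_mul c2).div_const 3
      exact this.congr_deriv (by push_cast; ring)
    exact (h1.add h2).add h3
  rw [intervalIntegral.integral_eq_sub_of_hasDerivAt (fun s _ => hd s)
    (Continuous.intervalIntegrable (by fun_prop) x y)]

private lemma weight_int (a b u v : ℝ) :
    (∫ s in a..((a+b)/2), (s - a) * (u + v * s)) + (∫ s in ((a+b)/2)..b, (b - s) * (u + v * s))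
      = (b - a) ^ 2 / 4 * (u + v * ((a + b) / 2)) := by
  have e1 : (fun s : ℝ => (s - a) * (u + v * s))
      = fun s => (-(a * u)) + (u - a * v) * s + v * s ^ 2 := by funext s; ring
  have e2 : (fun s : ℝ => (b - s) * (u + v * s))
      = fun s => b * u + (b * v - u) * s + (-v) * s ^ 2 := by funext s; ring
  rw [e1, e2, cubic_int, cubic_int]; ring

theorem stmt_6 (f f' g : ℝ → ℝ) (a b q : ℝ) (hab : a < b) (hq : 1 ≤ q)
    (I : Set ℝ) (hI : IsOpen I) (hIab : Icc a b ⊆ I)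
    (hf : ∀ t ∈ I, HasDerivAt f (f' t) t)
    (hf' : IntervalIntegrable f' volume a b)
    (hconv : ConvexOn ℝ (Icc a b) (fun t => |f' t| ^ q))
    (hg : ContinuousOn g (Icc a b)) :
    |f ((a + b) / 2) * (∫ s in a..b, g s) - ∫ s in a..b, f s * g s|
      ≤ sSup ((fun t => |g t|) '' Icc a b) * ((b - a) ^ 2 / 4) *
        ((|f' a| ^ q + |f' b| ^ q) / 2) ^ (1 / q) := by
  have hba : (0:ℝ) < b - a := by linarith
  have hq0 : (0:ℝ) < q := lt_of_lt_of_le one_pos hq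
  set p : ℝ := 1 / q with hp_def
  have hp0 : 0 < p := by rw [hp_def]; positivity
  have hp1 : p ≤ 1 := by rw [hp_def, div_le_one hq0]; exact hq
  set m : ℝ := (a + b) / 2 with hm_def
  have hma : a ≤ m := by rw [hm_def]; linarith
  have hmb : m ≤ b := by rw [hm_def]; linarith
  have hmI : m ∈ Icc a b := ⟨hma, hmb⟩
  set A : ℝ := |f' a| ^ q with hA_def
  set B : ℝ := |f' b| ^ q with hB_def
  have hA0 : 0 ≤ A := Real.rpow_nonneg (abs_nonneg _) q
  have hB0 : 0 ≤ B := Real.rpow_nonneg (abs_nonneg _) q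
  set c : ℝ := (A + B) / 2 with hc_def
  have hc0 : 0 ≤ c := by rw [hc_def]; linarith
  set l : ℝ → ℝ := fun t => ((b - t) * A + (t - a) * B) / (b - a) with hl_def
  have hl_nonneg : ∀ t ∈ Icc a b, 0 ≤ l t := by
    intro t ht
    exact div_nonneg (add_nonneg (mul_nonneg (by linarith [ht.2]) hA0)
      (mul_nonneg (by linarith [ht.1]) hB0)) hba.le
  have hconv_pt : ∀ t ∈ Icc a b, |f' t| ^ q ≤ l t := by
    intro t ht
    have h1 : 0 ≤ (b - t) / (b - a) := div_nonneg (by linarith [ht.2]) hba.le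
    have h2 : 0 ≤ (t - a) / (b - a) := div_nonneg (by linarith [ht.1]) hba.le
    have h3 : (b - t) / (b - a) + (t - a) / (b - a) = 1 := by field_simp; ring
    have h4 := hconv.2 (left_mem_Icc.2 hab.le) (right_mem_Icc.2 hab.le) h1 h2 h3
    simp only [smul_eq_mul] at h4
    have h5 : (b - t) / (b - a) * a + (t - a) / (b - a) * b = t := by
      field_simp; ring
    rw [h5] at h4
    calc |f' t| ^ q ≤ (b - t) / (b - a) * A + (t - a) / (b - a) * B := h4
      _ = l t := by rw [hl_def]; ring
  set ψ : ℝ → ℝ := fun t => max (l t) 0 ^ p with hψ_def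
  have hlc : Continuous l := by rw [hl_def]; fun_prop
  have hψcont : Continuous ψ := by
    rw [hψ_def]
    exact (hlc.max continuous_const).rpow_const (fun x => Or.inr hp0.le)
  have hψ0 : ∀ t, 0 ≤ ψ t := fun t => Real.rpow_nonneg (le_max_right _ _) p
  have hψeq : ∀ t ∈ Icc a b, ψ t = l t ^ p := by
    intro t ht
    rw [hψ_def]
    simp only [max_eq_left (hl_nonneg t ht)]
  have hfbd : ∀ t ∈ Icc a b, |f' t| ≤ ψ t := by
    intro t ht
    have h1 : (|f' t| ^ q) ^ p = |f' t| := by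
      rw [hp_def, ← Real.rpow_mul (abs_nonneg _), mul_one_div_cancel hq0.ne', Real.rpow_one]
    rw [← h1, hψeq t ht]
    exact Real.rpow_le_rpow (Real.rpow_nonneg (abs_nonneg _) q) (hconv_pt t ht) hp0.le
  set Ψ : ℝ → ℝ := fun x => ∫ t in a..x, ψ t with hΨ_def
  have hΨd : ∀ x, HasDerivAt Ψ (ψ x) x := fun x => (hψcont.integral_hasStrictDerivAt a x).hasDerivAt
  have hΨc : Continuous Ψ := continuous_iff_continuousAt.2 fun x => (hΨd x).continuousAt
  have hΨsub : ∀ s : ℝ, Ψ m - Ψ s = ∫ t in s..m, ψ t := fun s =>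
    intervalIntegral.integral_interval_sub_left (hψcont.intervalIntegrable a m)
      (hψcont.intervalIntegrable a s)
  set E : ℝ → ℝ := fun s => |Ψ m - Ψ s| with hE_def
  have hEc : Continuous E := (continuous_const.sub hΨc).abs
  have hE0 : ∀ s, 0 ≤ E s := fun s => abs_nonneg _
  -- pointwise bound |f m - f s| ≤ E s
  have hsub_uIcc : ∀ s ∈ Icc a b, uIcc s m ⊆ uIcc a b := by
    intro s hs
    exact uIcc_subset_uIcc (by rwa [uIcc_of_le hab.le]) (by rw [uIcc_of_le hab.le]; exact hmI)
  have hDE : ∀ s ∈ Icc a b, |f m - f s| ≤ E s := by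
    intro s hs
    have hftc : ∫ t in s..m, f' t = f m - f s := by
      apply intervalIntegral.integral_eq_sub_of_hasDerivAt
      · intro t ht
        have : t ∈ Icc a b := by
          have := hsub_uIcc s hs ht
          rwa [uIcc_of_le hab.le] at this
        exact hf t (hIab this)
      · exact hf'.mono_set (hsub_uIcc s hs)
    have key : abs (∫ t in s..m, |f' t|) ≤ |∫ t in s..m, ψ t| := by
      rcases le_total s m with h | h
      · have mono := intervalIntegral.integral_mono_on h ((hf'.mono_set (hsub_uIcc s hs)).abs)
          (hψcont.intervalIntegrable s m)
          (fun t ht => hfbd t ⟨le_trans hs.1 ht.1, le_trans ht.2 hmb⟩)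
        have n1 : 0 ≤ ∫ t in s..m, |f' t| :=
          intervalIntegral.integral_nonneg h (fun t _ => abs_nonneg _)
        rw [abs_of_nonneg n1]
        exact mono.trans (le_abs_self _)
      · rw [intervalIntegral.integral_symm m s, intervalIntegral.integral_symm m s, abs_neg, abs_neg]
        have mono := intervalIntegral.integral_mono_on h
          ((hf'.mono_set (hsub_uIcc s hs)).symm.abs)
          (hψcont.intervalIntegrable m s)
          (fun t ht => hfbd t ⟨le_trans hma ht.1, le_trans ht.2 hs.2⟩)
        have n1 : 0 ≤ ∫ t in m..s, |f' t| :=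
          intervalIntegral.integral_nonneg h (fun t _ => abs_nonneg _)
        rw [abs_of_nonneg n1]
        exact mono.trans (le_abs_self _)
    calc |f m - f s| = |∫ t in s..m, f' t| := by rw [hftc]
      _ ≤ abs (∫ t in s..m, |f' t|) := by
          simpa [Real.norm_eq_abs] using
            intervalIntegral.norm_integral_le_abs_integral_norm (f := f') (a := s) (b := m)
              (μ := volume)
      _ ≤ |∫ t in s..m, ψ t| := key
      _ = E s := by rw [hE_def]; simp only [hΨsub s]
  -- continuity and integrability facts
  have hfc : ContinuousOn f (Icc a b) :=
    fun t ht => ((hf t (hIab ht)).continuousAt).continuousWithinAt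
  have hgi : IntervalIntegrable g volume a b := by
    apply ContinuousOn.intervalIntegrable; rwa [uIcc_of_le hab.le]
  have hfgi : IntervalIntegrable (fun s => f s * g s) volume a b := by
    apply ContinuousOn.intervalIntegrable; rw [uIcc_of_le hab.le]; exact hfc.mul hg
  have hconstgi : IntervalIntegrable (fun s => f m * g s) volume a b := by
    apply ContinuousOn.intervalIntegrable; rw [uIcc_of_le hab.le]
    exact continuousOn_const.mul hg
  have hrw : f m * (∫ s in a..b, g s) - ∫ s in a..b, f s * g s
      = ∫ s in a..b, (f m - f s) * g s := by
    rw [← intervalIntegral.integral_const_mul, ← intervalIntegral.integral_sub hconstgi hfgi]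
    exact intervalIntegral.integral_congr (fun s _ => by ring)
  set M : ℝ := sSup ((fun t => |g t|) '' Icc a b) with hM_def
  have hbdd : BddAbove ((fun t => |g t|) '' Icc a b) :=
    (isCompact_Icc.image_of_continuousOn hg.abs).bddAbove
  have hM : ∀ s ∈ Icc a b, |g s| ≤ M := fun s hs => le_csSup hbdd ⟨s, hs, rfl⟩
  have hM0 : 0 ≤ M := le_trans (abs_nonneg _) (hM a (left_mem_Icc.2 hab.le))
  -- step 1
  have step1 : |∫ s in a..b, (f m - f s) * g s| ≤ ∫ s in a..b, E s * M := by
    calc |∫ s in a..b, (f m - f s) * g s| ≤ ∫ s in a..b, |(f m - f s) * g s| :=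
        intervalIntegral.abs_integral_le_integral_abs hab.le
      _ ≤ ∫ s in a..b, E s * M := by
          apply intervalIntegral.integral_mono_on hab.le
          · apply ContinuousOn.intervalIntegrable; rw [uIcc_of_le hab.le]
            exact ((continuousOn_const.sub hfc).mul hg).abs
          · exact (hEc.mul continuous_const).intervalIntegrable a b
          · intro s hs
            rw [abs_mul]
            exact mul_le_mul (hDE s hs) (hM s hs) (abs_nonneg _) (hE0 s)
  -- split integral of E
  have hsplit : ∫ s in a..b, E s = (∫ s in a..m, E s) + ∫ s in m..b, E s :=
    (intervalIntegral.integral_add_adjacent_intervals (hEc.intervalIntegrable a m)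
      (hEc.intervalIntegrable m b)).symm
  -- left integration by parts
  have hleft : ∫ s in a..m, E s = ∫ s in a..m, (s - a) * ψ s := by
    have hE_eq : EqOn E (fun s => Ψ m - Ψ s) (uIcc a m) := by
      intro s hs
      rw [uIcc_of_le hma] at hs
      have h0 : 0 ≤ Ψ m - Ψ s := by
        rw [hΨsub s]
        exact intervalIntegral.integral_nonneg hs.2 (fun t _ => hψ0 t)
      rw [hE_def]
      exact abs_of_nonneg h0
    rw [intervalIntegral.integral_congr hE_eq]
    have hP : ∀ s : ℝ, HasDerivAt (fun x => (x - a) * (Ψ m - Ψ x))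
        ((Ψ m - Ψ s) - (s - a) * ψ s) s := by
      intro s
      have h1 : HasDerivAt (fun x : ℝ => x - a) 1 s := (hasDerivAt_id s).sub_const a
      have h2 : HasDerivAt (fun x => Ψ m - Ψ x) (-ψ s) s := (hΨd s).const_sub (Ψ m)
      have := h1.mul h2
      exact this.congr_deriv (by ring)
    have hint : ∫ s in a..m, ((Ψ m - Ψ s) - (s - a) * ψ s) = 0 := by
      rw [intervalIntegral.integral_eq_sub_of_hasDerivAt (fun s _ => hP s)
        (Continuous.intervalIntegrable
          ((continuous_const.sub hΨc).sub ((continuous_id.sub continuous_const).mul hψcont)) a m)]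
      simp
    have h2 : ∫ s in a..m, ((Ψ m - Ψ s) - (s - a) * ψ s)
        = (∫ s in a..m, (Ψ m - Ψ s)) - ∫ s in a..m, (s - a) * ψ s :=
      intervalIntegral.integral_sub
        (Continuous.intervalIntegrable (by fun_prop) a m)
        (Continuous.intervalIntegrable (by fun_prop) a m)
    rw [h2] at hint
    linarith [hint]
  -- right integration by parts
  have hright : ∫ s in m..b, E s = ∫ s in m..b, (b - s) * ψ s := by
    have hE_eq : EqOn E (fun s => Ψ s - Ψ m) (uIcc m b) := by
      intro s hs
      rw [uIcc_of_le hmb] at hs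
      have h0 : 0 ≤ Ψ s - Ψ m := by
        have : Ψ s - Ψ m = ∫ t in m..s, ψ t := by
          rw [← neg_sub, hΨsub s, ← intervalIntegral.integral_symm]
        rw [this]
        exact intervalIntegral.integral_nonneg hs.1 (fun t _ => hψ0 t)
      simp only [hE_def]
      rw [abs_sub_comm]
      exact abs_of_nonneg h0
    rw [intervalIntegral.integral_congr hE_eq]
    have hQ : ∀ s : ℝ, HasDerivAt (fun x => (b - x) * (Ψ x - Ψ m))
        (((b - s) * ψ s) - (Ψ s - Ψ m)) s := by
      intro s
      have h1 : HasDerivAt (fun x : ℝ => b - x) (-1) s := (hasDerivAt_id s).const_sub b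
      have h2 : HasDerivAt (fun x => Ψ x - Ψ m) (ψ s) s := (hΨd s).sub_const (Ψ m)
      have := h1.mul h2
      exact this.congr_deriv (by ring)
    have hint : ∫ s in m..b, (((b - s) * ψ s) - (Ψ s - Ψ m)) = 0 := by
      rw [intervalIntegral.integral_eq_sub_of_hasDerivAt (fun s _ => hQ s)
        (Continuous.intervalIntegrable
          (((continuous_const.sub continuous_id).mul hψcont).sub (hΨc.sub continuous_const)) m b)]
      simp
    have h2 : ∫ s in m..b, (((b - s) * ψ s) - (Ψ s - Ψ m))
        = (∫ s in m..b, (b - s) * ψ s) - ∫ s in m..b, (Ψ s - Ψ m) :=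
      intervalIntegral.integral_sub
        (Continuous.intervalIntegrable (by fun_prop) m b)
        (Continuous.intervalIntegrable (by fun_prop) m b)
    rw [h2] at hint
    linarith [hint]
  -- key estimate
  have hT : (∫ s in a..m, (s - a) * ψ s) + (∫ s in m..b, (b - s) * ψ s)
      ≤ (b - a) ^ 2 / 4 * c ^ p := by
    rcases eq_or_lt_of_le hc0 with hceq | hcpos
    · have hA : A = 0 := by rw [hc_def] at hceq; linarith [hceq.symm]
      have hB : B = 0 := by rw [hc_def] at hceq; linarith [hceq.symm]
      have hψz : ∀ t, ψ t = 0 := by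
        intro t
        rw [hψ_def]
        simp only [hl_def, hA, hB, mul_zero, add_zero, zero_div, max_self]
        exact Real.zero_rpow hp0.ne'
      have hz1 : ∫ s in a..m, (s - a) * ψ s = 0 := by
        rw [intervalIntegral.integral_congr (g := fun _ => (0:ℝ)) (fun s _ => by rw [hψz s]; ring)]
        simp
      have hz2 : ∫ s in m..b, (b - s) * ψ s = 0 := by
        rw [intervalIntegral.integral_congr (g := fun _ => (0:ℝ)) (fun s _ => by rw [hψz s]; ring)]
        simp
      rw [hz1, hz2, ← hceq, Real.zero_rpow hp0.ne']
      simp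
    · set k : ℝ := p * c ^ (p - 1) with hk_def
      have hk0 : 0 ≤ k := mul_nonneg hp0.le (Real.rpow_nonneg hc0 _)
      set u : ℝ := c ^ p - k * c + k * (b * A - a * B) / (b - a) with hu_def
      set v : ℝ := k * (B - A) / (b - a) with hv_def
      have hτ : ∀ s ∈ Icc a b, ψ s ≤ u + v * s := by
        intro s hs
        have h2 := bern_aux hp0 hp1 (hl_nonneg s hs) hcpos
        have h3 : c ^ p + p * c ^ (p - 1) * (l s - c) = u + v * s := by
          rw [hu_def, hv_def, hk_def, hl_def]
          field_simp
          ring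
        rw [hψeq s hs, ← h3]
        exact h2
      have hmono1 : (∫ s in a..m, (s - a) * ψ s) ≤ ∫ s in a..m, (s - a) * (u + v * s) := by
        apply intervalIntegral.integral_mono_on hma ?_ ?_ ?_
        · exact Continuous.intervalIntegrable (by fun_prop) a m
        · exact Continuous.intervalIntegrable (by fun_prop) a m
        intro s hs
        exact mul_le_mul_of_nonneg_left (hτ s ⟨hs.1, le_trans hs.2 hmb⟩) (by linarith [hs.1])
      have hmono2 : (∫ s in m..b, (b - s) * ψ s) ≤ ∫ s in m..b, (b - s) * (u + v * s) := by
        apply intervalIntegral.integral_mono_on hmb ?_ ?_ ?_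
        · exact Continuous.intervalIntegrable (by fun_prop) m b
        · exact Continuous.intervalIntegrable (by fun_prop) m b
        intro s hs
        exact mul_le_mul_of_nonneg_left (hτ s ⟨le_trans hma hs.1, hs.2⟩) (by linarith [hs.2])
      have huv : u + v * ((a + b) / 2) = c ^ p := by
        rw [hu_def, hv_def, hc_def]
        field_simp
        ring
      calc (∫ s in a..m, (s - a) * ψ s) + (∫ s in m..b, (b - s) * ψ s)
          ≤ (∫ s in a..m, (s - a) * (u + v * s)) + ∫ s in m..b, (b - s) * (u + v * s) :=
            add_le_add hmono1 hmono2
        _ = (b - a) ^ 2 / 4 * (u + v * ((a + b) / 2)) := by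
            rw [hm_def]; exact weight_int a b u v
        _ = (b - a) ^ 2 / 4 * c ^ p := by rw [huv]
  -- final assembly
  rw [hrw]
  calc |∫ s in a..b, (f m - f s) * g s| ≤ ∫ s in a..b, E s * M := step1
    _ = (∫ s in a..b, E s) * M := intervalIntegral.integral_mul_const M E
    _ = M * ((∫ s in a..m, (s - a) * ψ s) + ∫ s in m..b, (b - s) * ψ s) := by
        rw [hsplit, hleft, hright]; ring
    _ ≤ M * ((b - a) ^ 2 / 4 * c ^ p) := mul_le_mul_of_nonneg_left hT hM0
    _ = M * ((b - a) ^ 2 / 4) * c ^ p := by ring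
end

section
/- For a < b, α > 0, and x ∈ [a,b]: ∫_a^b |t−x|·((b−t)/(b−a))^α dt = [(b−a)^{α+1}(2x−b−a+α(x−a)) + 2(b−x)^{α+2}] / [(α+1)(α+2)(b−a)^α]. -/
open MeasureTheory Set

private lemma rpow_succ' {y : ℝ} (hy : 0 ≤ y) {r : ℝ} (hr : r + 1 ≠ 0) :
    y ^ (r + 1) = y ^ r * y := by
  rcases hy.eq_or_lt with h | h
  · simp [← h, Real.zero_rpow hr]
  · rw [Real.rpow_add_one h.ne']

private lemma Jval (b u v r : ℝ) (hr : -1 < r) :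
    ∫ t in u..v, (b - t) ^ r = ((b - u) ^ (r + 1) - (b - v) ^ (r + 1)) / (r + 1) := by
  rw [intervalIntegral.integral_comp_sub_left (fun s => s ^ r) b,
    integral_rpow (Or.inl hr)]

theorem stmt_11 (a b x α : ℝ) (hab : a < b) (hα : 0 < α) (hx : x ∈ Icc a b) :
    ∫ t in a..b, |t - x| * ((b - t) / (b - a)) ^ α
      = ((b - a) ^ (α + 1) * (2 * x - b - a + α * (x - a)) + 2 * (b - x) ^ (α + 2)) /
        ((α + 1) * (α + 2) * (b - a) ^ α) := by
  obtain ⟨hax, hxb⟩ := hx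
  have hba : (0:ℝ) < b - a := by linarith
  have h1 : α + 1 ≠ 0 := by positivity
  have h2 : α + 2 ≠ 0 := by positivity
  have hcont : Continuous fun t : ℝ => (b - t) ^ α :=
    (continuous_const.sub continuous_id).rpow_const (fun t => Or.inr hα.le)
  have hcont1 : Continuous fun t : ℝ => (b - t) ^ (α + 1) :=
    (continuous_const.sub continuous_id).rpow_const (fun t => Or.inr (by linarith))
  have hcontA : Continuous fun t : ℝ => |t - x| * (b - t) ^ α :=
    ((continuous_id.sub continuous_const).abs).mul hcont
  have hrw : ∫ t in a..b, |t - x| * ((b - t) / (b - a)) ^ α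
      = (∫ t in a..b, |t - x| * (b - t) ^ α) / (b - a) ^ α := by
    rw [← intervalIntegral.integral_div]
    apply intervalIntegral.integral_congr
    intro t ht
    dsimp only
    rw [uIcc_of_le hab.le] at ht
    rw [Real.div_rpow (by linarith [ht.2]) hba.le, mul_div_assoc]
  have hsplit : ∫ t in a..b, |t - x| * (b - t) ^ α
      = (∫ t in a..x, |t - x| * (b - t) ^ α) + ∫ t in x..b, |t - x| * (b - t) ^ α :=
    (intervalIntegral.integral_add_adjacent_intervals
      (hcontA.intervalIntegrable a x) (hcontA.intervalIntegrable x b)).symm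
  have e12 : α + 1 + 1 = α + 2 := by ring
  have hI1 : ∫ t in a..x, |t - x| * (b - t) ^ α
      = (x - b) * (((b - a) ^ (α + 1) - (b - x) ^ (α + 1)) / (α + 1))
        + ((b - a) ^ (α + 2) - (b - x) ^ (α + 2)) / (α + 2) := by
    have hc : ∫ t in a..x, |t - x| * (b - t) ^ α
        = ∫ t in a..x, ((x - b) * (b - t) ^ α + (b - t) ^ (α + 1)) := by
      apply intervalIntegral.integral_congr
      intro t ht
      dsimp only
      rw [uIcc_of_le hax] at ht
      have hbt : 0 ≤ b - t := by linarith [ht.2]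
      rw [abs_of_nonpos (by linarith [ht.2] : t - x ≤ 0), rpow_succ' hbt h1]
      ring
    rw [hc, intervalIntegral.integral_add
        ((hcont.const_mul (x - b)).intervalIntegrable a x)
        (hcont1.intervalIntegrable a x),
      intervalIntegral.integral_const_mul, Jval b a x α (by linarith),
      Jval b a x (α + 1) (by linarith), e12]
  have hI2 : ∫ t in x..b, |t - x| * (b - t) ^ α
      = (b - x) * (((b - x) ^ (α + 1) - 0) / (α + 1))
        - ((b - x) ^ (α + 2) - 0) / (α + 2) := by
    have hc : ∫ t in x..b, |t - x| * (b - t) ^ α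
        = ∫ t in x..b, ((b - x) * (b - t) ^ α - (b - t) ^ (α + 1)) := by
      apply intervalIntegral.integral_congr
      intro t ht
      dsimp only
      rw [uIcc_of_le hxb] at ht
      have hbt : 0 ≤ b - t := by linarith [ht.2]
      rw [abs_of_nonneg (by linarith [ht.1] : 0 ≤ t - x), rpow_succ' hbt h1]
      ring
    rw [hc, intervalIntegral.integral_sub
        ((hcont.const_mul (b - x)).intervalIntegrable x b)
        (hcont1.intervalIntegrable x b),
      intervalIntegral.integral_const_mul, Jval b x b α (by linarith),
      Jval b x b (α + 1) (by linarith), e12, sub_self,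
      Real.zero_rpow h1, Real.zero_rpow h2]
  rw [hrw, hsplit, hI1, hI2]
  have hbx : (0:ℝ) ≤ b - x := by linarith
  have hC : (0:ℝ) < (b - a) ^ α := Real.rpow_pos_of_pos hba α
  have eA1 : (b - a) ^ (α + 1) = (b - a) ^ α * (b - a) := rpow_succ' hba.le h1
  have eA2 : (b - a) ^ (α + 2) = (b - a) ^ α * (b - a) * (b - a) := by
    rw [← e12, rpow_succ' hba.le (by rw [e12]; exact h2), eA1]
  have eB2 : (b - x) ^ (α + 2) = (b - x) ^ (α + 1) * (b - x) := by
    rw [← e12, rpow_succ' hbx (by rw [e12]; exact h2)]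
  rw [eA1, eA2, eB2]
  field_simp
  ring
end

section
/- Let f be differentiable on an open interval containing [a,b] with a < b, f' bounded and integrable on [a,b], and g : [a,b] → ℝ continuous. Then for all x ∈ [a,b]: |f(a)∫_a^x g + f(b)∫_x^b g − ∫_a^b fg| ≤ ‖g‖_∞ · ∫_a^b |t−x|·|f'(t)| dt. -/
open MeasureTheory Set

theorem stmt_18 (f f' g : ℝ → ℝ) (a b : ℝ) (hab : a < b)
    (I : Set ℝ) (hI : IsOpen I) (hIab : Icc a b ⊆ I)
    (hf : ∀ t ∈ I, HasDerivAt f (f' t) t)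
    (hf' : IntervalIntegrable f' volume a b)
    (hbdd : ∃ C, ∀ t ∈ Icc a b, |f' t| ≤ C)
    (hg : ContinuousOn g (Icc a b))
    (x : ℝ) (hx : x ∈ Icc a b) :
    |f a * (∫ s in a..x, g s) + f b * (∫ s in x..b, g s) - ∫ s in a..b, f s * g s|
      ≤ sSup ((fun t => |g t|) '' Icc a b) * ∫ t in a..b, |t - x| * |f' t| := by
  obtain ⟨hax, hxb⟩ := hx
  have hab' : a ≤ b := hab.le
  have huIcc : uIcc a b = Icc a b := uIcc_of_le hab'
  -- extend g continuously to all of ℝ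
  set g1 : ℝ → ℝ := IccExtend hab' (fun t : Icc a b => g t) with hg1def
  have hg1cont : Continuous g1 :=
    Continuous.Icc_extend' (continuousOn_iff_continuous_restrict.mp hg)
  have hg1eq : ∀ t ∈ Icc a b, g1 t = g t := fun t ht => IccExtend_of_mem hab' _ ht
  -- primitive of g1
  set G : ℝ → ℝ := fun t => ∫ s in a..t, g1 s with hGdef
  have hGderiv : ∀ t : ℝ, HasDerivAt G (g1 t) t := fun t =>
    intervalIntegral.integral_hasDerivAt_right (hg1cont.intervalIntegrable _ _)
      hg1cont.stronglyMeasurable.stronglyMeasurableAtFilter hg1cont.continuousAt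
  have hGcont : Continuous G :=
    continuous_iff_continuousAt.mpr fun t => (hGderiv t).continuousAt
  -- the sup bound
  set M := sSup ((fun t => |g t|) '' Icc a b) with hM
  have hbddM : BddAbove ((fun t => |g t|) '' Icc a b) :=
    (isCompact_Icc.image_of_continuousOn hg.abs).bddAbove
  have hMle : ∀ t ∈ Icc a b, |g1 t| ≤ M := fun t ht => by
    rw [hg1eq t ht]; exact le_csSup hbddM ⟨t, ht, rfl⟩
  -- bound on increments of G
  have hGbound : ∀ t ∈ Icc a b, |G t - G x| ≤ M * |t - x| := by
    intro t ht
    have hsub : G t - G x = ∫ s in x..t, g1 s :=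
      (intervalIntegral.integral_interval_sub_left (hg1cont.intervalIntegrable _ _)
        (hg1cont.intervalIntegrable _ _))
    rw [hsub, ← Real.norm_eq_abs]
    apply intervalIntegral.norm_integral_le_of_norm_le_const
    intro y hy
    rw [Real.norm_eq_abs]
    rw [Set.mem_uIoc] at hy
    rcases hy with ⟨h1',h2'⟩|⟨h1',h2'⟩
    · exact hMle y ⟨hax.trans h1'.le, h2'.trans ht.2⟩
    · exact hMle y ⟨ht.1.trans h1'.le, h2'.trans hxb⟩
  -- FTC for f
  have hfa : ∀ t ∈ uIcc a b, HasDerivAt f (f' t) t := fun t ht =>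
    hf t (hIab (huIcc ▸ ht))
  have hftc : ∫ s in a..b, f' s = f b - f a :=
    intervalIntegral.integral_eq_sub_of_hasDerivAt hfa hf'
  -- integration by parts
  have hparts : ∫ s in a..b, f s * g1 s
      = f b * G b - f a * G a - ∫ s in a..b, f' s * G s :=
    intervalIntegral.integral_mul_deriv_eq_deriv_mul hfa (fun t _ => hGderiv t) hf'
      (hg1cont.intervalIntegrable _ _)
  have hGa : G a = 0 := intervalIntegral.integral_same
  -- rewrite the g-integrals via g1
  have h1 : ∫ s in a..x, g s = G x := by
    refine (intervalIntegral.integral_congr fun s hs => ?_).symm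
    exact hg1eq s (Icc_subset_Icc le_rfl hxb (uIcc_of_le hax ▸ hs))
  have h2 : ∫ s in x..b, g s = G b - G x := by
    have : ∫ s in x..b, g1 s = G b - G x :=
      (intervalIntegral.integral_interval_sub_left (hg1cont.intervalIntegrable _ _)
        (hg1cont.intervalIntegrable _ _)).symm
    rw [← this]
    exact intervalIntegral.integral_congr fun s hs =>
      (hg1eq s (Icc_subset_Icc hax le_rfl (uIcc_of_le hxb ▸ hs))).symm
  have h3 : ∫ s in a..b, f s * g s = ∫ s in a..b, f s * g1 s :=
    intervalIntegral.integral_congr fun s hs => by rw [hg1eq s (huIcc ▸ hs)]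
  -- integrability facts
  have hfG : IntervalIntegrable (fun t => f' t * G t) volume a b :=
    hf'.mul_continuousOn hGcont.continuousOn
  have hfGx : IntervalIntegrable (fun t => f' t * G x) volume a b := hf'.mul_const _
  -- the key identity
  have key : f a * (∫ s in a..x, g s) + f b * (∫ s in x..b, g s) - ∫ s in a..b, f s * g s
      = ∫ t in a..b, f' t * (G t - G x) := by
    rw [h1, h2, h3, hparts, hGa]
    have hsub : ∫ t in a..b, f' t * (G t - G x)
        = (∫ t in a..b, f' t * G t) - ∫ t in a..b, f' t * G x := by
      rw [← intervalIntegral.integral_sub hfG hfGx]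
      congr 1; ext t; ring
    rw [hsub, intervalIntegral.integral_mul_const, hftc]
    ring
  rw [key]
  -- integrability of the bounding functions
  have hint1 : IntervalIntegrable (fun t => |f' t * (G t - G x)|) volume a b :=
    (hf'.mul_continuousOn ((hGcont.sub continuous_const).continuousOn)).abs
  have hint2 : IntervalIntegrable (fun t => M * (|t - x| * |f' t|)) volume a b := by
    apply IntervalIntegrable.const_mul
    exact hf'.abs.continuousOn_mul ((continuous_abs.comp (continuous_id.sub continuous_const)).continuousOn)
  calc |∫ t in a..b, f' t * (G t - G x)|
      ≤ ∫ t in a..b, |f' t * (G t - G x)| :=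
        intervalIntegral.abs_integral_le_integral_abs hab'
    _ ≤ ∫ t in a..b, M * (|t - x| * |f' t|) := by
        apply intervalIntegral.integral_mono_on hab' hint1 hint2
        intro t ht
        rw [abs_mul]
        calc |f' t| * |G t - G x| ≤ |f' t| * (M * |t - x|) :=
              mul_le_mul_of_nonneg_left (hGbound t ht) (abs_nonneg _)
          _ = M * (|t - x| * |f' t|) := by ring
    _ = M * ∫ t in a..b, |t - x| * |f' t| := intervalIntegral.integral_const_mul _ _
end

section
/- Let f be differentiable on an open interval containing [a,b] with a < b, f' integrable on [a,b], g : [a,b] → ℝ continuous, and x ∈ [a,b]. Then |f(x)∫_a^b g − ∫_a^b fg| ≤ ‖g‖_∞ · [∫_a^x (t−a)|f'(t)| dt + ∫_x^b (b−t)|f'(t)| dt]. -/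
open MeasureTheory Set intervalIntegral

lemma fubini_tri (h : ℝ → ℝ) (a x : ℝ) (hh : IntegrableOn h (Ioc a x)) :
    ∫ s in Ioc a x, (∫ t in Ioc s x, h t) = ∫ t in Ioc a x, (t - a) * h t := by
  set μ := volume.restrict (Ioc a x) with hμ
  have hfin : IsFiniteMeasure μ := by
    constructor; rw [hμ, Measure.restrict_apply_univ]; exact measure_Ioc_lt_top
  set F : ℝ × ℝ → ℝ := fun p => {q : ℝ × ℝ | q.1 < q.2}.indicator (fun q => h q.2) p with hF
  have hmeas : AEStronglyMeasurable F (μ.prod μ) := by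
    apply AEStronglyMeasurable.indicator
    · exact hh.aestronglyMeasurable.comp_snd
    · exact measurableSet_lt measurable_fst measurable_snd
  have hint : Integrable F (μ.prod μ) := by
    refine (integrable_prod_iff hmeas).2 ⟨?_, ?_⟩
    · refine Filter.Eventually.of_forall fun s => ?_
      have : (fun t => F (s, t)) = fun t => (Ioi s).indicator h t := by
        ext t; simp only [hF, indicator]; rfl
      rw [this]
      exact hh.indicator measurableSet_Ioi
    · apply Integrable.mono' (g := fun _ : ℝ => ∫ t, |h t| ∂μ)
      · exact integrable_const _
      · exact hmeas.norm.integral_prod_right'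
      · refine Filter.Eventually.of_forall fun s => ?_
        rw [Real.norm_eq_abs, abs_of_nonneg (integral_nonneg fun t => norm_nonneg _)]
        apply integral_mono_of_nonneg (Filter.Eventually.of_forall fun t => norm_nonneg _)
          hh.abs
        refine Filter.Eventually.of_forall fun t => ?_
        show ‖_‖ ≤ |h t|
        exact norm_indicator_le_norm_self _ _
  have key := integral_integral_swap (μ := μ) (ν := μ) (f := fun s t => F (s, t)) hint
  calc ∫ s in Ioc a x, (∫ t in Ioc s x, h t)
      = ∫ s, (∫ t, F (s, t) ∂μ) ∂μ := by
        rw [hμ]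
        refine setIntegral_congr_fun measurableSet_Ioc fun s hs => ?_
        have h1 : (fun t => F (s, t)) = fun t => (Ioi s).indicator h t := by
          ext t; simp only [hF, indicator]; rfl
        rw [h1, MeasureTheory.integral_indicator measurableSet_Ioi,
          Measure.restrict_restrict measurableSet_Ioi]
        congr 1
        rw [inter_comm, Ioc_inter_Ioi, max_eq_right hs.1.le]
    _ = ∫ t, (∫ s, F (s, t) ∂μ) ∂μ := key
    _ = ∫ t in Ioc a x, (t - a) * h t := by
        rw [hμ]
        refine setIntegral_congr_fun measurableSet_Ioc fun t ht => ?_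
        have h1 : (fun s => F (s, t)) = fun s => (Iio t).indicator (fun _ => h t) s := by
          ext s; simp only [hF, indicator]; rfl
        rw [h1, integral_indicator_const _ measurableSet_Iio,
          measureReal_def, Measure.restrict_apply measurableSet_Iio]
        have h2 : Iio t ∩ Ioc a x = Ioo a t := by
          ext s
          simp only [mem_inter_iff, mem_Iio, mem_Ioc, mem_Ioo]
          constructor
          · rintro ⟨h1, h2, h3⟩; exact ⟨h2, h1⟩
          · rintro ⟨h1, h2⟩; exact ⟨h2, h1, h2.le.trans ht.2⟩
        rw [h2, Real.volume_Ioo, ENNReal.toReal_ofReal (by linarith [ht.1] : (0:ℝ) ≤ t - a)]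
        simp [smul_eq_mul]

lemma fubini_tri2 (h : ℝ → ℝ) (x b : ℝ) (hh : IntegrableOn h (Ioc x b)) :
    ∫ s in Ioc x b, (∫ t in Ioc x s, h t) = ∫ t in Ioc x b, (b - t) * h t := by
  set μ := volume.restrict (Ioc x b) with hμ
  have hfin : IsFiniteMeasure μ := by
    constructor; rw [hμ, Measure.restrict_apply_univ]; exact measure_Ioc_lt_top
  set F : ℝ × ℝ → ℝ := fun p => {q : ℝ × ℝ | q.2 ≤ q.1}.indicator (fun q => h q.2) p with hF
  have hmeas : AEStronglyMeasurable F (μ.prod μ) := by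
    apply AEStronglyMeasurable.indicator
    · exact hh.aestronglyMeasurable.comp_snd
    · exact measurableSet_le measurable_snd measurable_fst
  have hint : Integrable F (μ.prod μ) := by
    refine (integrable_prod_iff hmeas).2 ⟨?_, ?_⟩
    · refine Filter.Eventually.of_forall fun s => ?_
      have h1 : (fun t => F (s, t)) = fun t => (Iic s).indicator h t := by
        ext t; simp only [hF, indicator]; rfl
      rw [h1]
      exact hh.indicator measurableSet_Iic
    · apply Integrable.mono' (g := fun _ : ℝ => ∫ t, |h t| ∂μ)
      · exact integrable_const _
      · exact hmeas.norm.integral_prod_right'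
      · refine Filter.Eventually.of_forall fun s => ?_
        rw [Real.norm_eq_abs, abs_of_nonneg (integral_nonneg fun t => norm_nonneg _)]
        apply integral_mono_of_nonneg (Filter.Eventually.of_forall fun t => norm_nonneg _)
          hh.abs
        refine Filter.Eventually.of_forall fun t => ?_
        show ‖_‖ ≤ |h t|
        exact norm_indicator_le_norm_self _ _
  have key := integral_integral_swap (μ := μ) (ν := μ) (f := fun s t => F (s, t)) hint
  calc ∫ s in Ioc x b, (∫ t in Ioc x s, h t)
      = ∫ s, (∫ t, F (s, t) ∂μ) ∂μ := by
        rw [hμ]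
        refine setIntegral_congr_fun measurableSet_Ioc fun s hs => ?_
        have h1 : (fun t => F (s, t)) = fun t => (Iic s).indicator h t := by
          ext t; simp only [hF, indicator]; rfl
        rw [h1, MeasureTheory.integral_indicator measurableSet_Iic,
          Measure.restrict_restrict measurableSet_Iic]
        congr 1
        rw [inter_comm, Ioc_inter_Iic, min_eq_right hs.2]
    _ = ∫ t, (∫ s, F (s, t) ∂μ) ∂μ := key
    _ = ∫ t in Ioc x b, (b - t) * h t := by
        rw [hμ]
        refine setIntegral_congr_fun measurableSet_Ioc fun t ht => ?_
        have h1 : (fun s => F (s, t)) = fun s => (Ici t).indicator (fun _ => h t) s := by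
          ext s; simp only [hF, indicator]; rfl
        rw [h1, integral_indicator_const _ measurableSet_Ici,
          measureReal_def, Measure.restrict_apply measurableSet_Ici]
        have h2 : Ici t ∩ Ioc x b = Icc t b := by
          ext s
          simp only [mem_inter_iff, mem_Ici, mem_Ioc, mem_Icc]
          constructor
          · rintro ⟨h1, h2, h3⟩; exact ⟨h1, h3⟩
          · rintro ⟨h1, h2⟩; exact ⟨h1, lt_of_lt_of_le ht.1 h1, h2⟩
        rw [h2, Real.volume_Icc, ENNReal.toReal_ofReal (by linarith [ht.2] : (0:ℝ) ≤ b - t)]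
        simp [smul_eq_mul]

theorem stmt_19 (f f' g : ℝ → ℝ) (a b : ℝ) (hab : a < b)
    (I : Set ℝ) (hI : IsOpen I) (hIab : Icc a b ⊆ I)
    (hf : ∀ t ∈ I, HasDerivAt f (f' t) t)
    (hf' : IntervalIntegrable f' volume a b)
    (hg : ContinuousOn g (Icc a b))
    (x : ℝ) (hx : x ∈ Icc a b) :
    |f x * (∫ s in a..b, g s) - ∫ s in a..b, f s * g s|
      ≤ sSup ((fun t => |g t|) '' Icc a b) *
        ((∫ t in a..x, (t - a) * |f' t|) + ∫ t in x..b, (b - t) * |f' t|) := by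
  obtain ⟨hax, hxb⟩ := hx
  have hx' : x ∈ Icc a b := ⟨hax, hxb⟩
  set M := sSup ((fun t => |g t|) '' Icc a b) with hM
  have hbdd : BddAbove ((fun t => |g t|) '' Icc a b) :=
    (isCompact_Icc.image_of_continuousOn hg.abs).bddAbove
  have hMle : ∀ t ∈ Icc a b, |g t| ≤ M := fun t ht => le_csSup hbdd ⟨t, ht, rfl⟩
  have hM0 : 0 ≤ M := le_trans (abs_nonneg (g a)) (hMle a ⟨le_refl a, hab.le⟩)
  have hfc : ContinuousOn f (Icc a b) := fun t ht =>
    ((hf t (hIab ht)).continuousAt).continuousWithinAt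
  -- interval integrability of continuous functions on subintervals
  have key_int : ∀ {φ : ℝ → ℝ}, ContinuousOn φ (Icc a b) → ∀ c d : ℝ, c ∈ Icc a b →
      d ∈ Icc a b → IntervalIntegrable φ volume c d := fun hφ c d hc hd =>
    (hφ.mono (uIcc_subset_Icc hc hd)).intervalIntegrable
  have ha' : a ∈ Icc a b := ⟨le_refl a, hab.le⟩
  have hb' : b ∈ Icc a b := ⟨hab.le, le_refl b⟩
  -- FTC
  have hftc : ∀ s ∈ Icc a b, ∫ t in s..x, f' t = f x - f s := fun s hs =>
    integral_eq_sub_of_hasDerivAt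
      (fun t ht => hf t (hIab (uIcc_subset_Icc hs hx' ht)))
      (hf'.mono_set (by rw [uIcc_of_le hab.le]; exact uIcc_subset_Icc hs hx'))
  have habs' : ∀ c d : ℝ, c ∈ Icc a b → d ∈ Icc a b →
      IntervalIntegrable (fun t => |f' t|) volume c d := fun c d hc hd =>
    (hf'.mono_set (by rw [uIcc_of_le hab.le]; exact uIcc_subset_Icc hc hd)).abs
  -- pointwise bounds
  have hpt1 : ∀ s ∈ Icc a x, |f x - f s| ≤ ∫ t in s..x, |f' t| := by
    intro s hs
    have hs' : s ∈ Icc a b := ⟨hs.1, hs.2.trans hxb⟩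
    rw [← hftc s hs']
    exact abs_integral_le_integral_abs hs.2
  have hpt2 : ∀ s ∈ Icc x b, |f x - f s| ≤ ∫ t in x..s, |f' t| := by
    intro s hs
    have hs' : s ∈ Icc a b := ⟨hax.trans hs.1, hs.2⟩
    rw [← hftc s hs', integral_symm, abs_neg]
    exact abs_integral_le_integral_abs hs.1
  -- continuity/integrability of the primitives
  have hux : uIcc a x = Icc a x := uIcc_of_le hax
  have huxb : uIcc x b = Icc x b := uIcc_of_le hxb
  have hInt1 : IntegrableOn (fun t => |f' t|) (uIcc a x) := by
    rw [hux]
    exact (integrableOn_Icc_iff_integrableOn_Ioc (by simp)).2 (habs' a x ha' hx').1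
  have hG1c : ContinuousOn (fun s => ∫ t in s..x, |f' t|) (Icc a x) := by
    rw [← hux]; exact continuousOn_primitive_interval_left hInt1
  have hInt2 : IntegrableOn (fun t => |f' t|) (uIcc x b) := by
    rw [huxb]
    exact (integrableOn_Icc_iff_integrableOn_Ioc (by simp)).2 (habs' x b hx' hb').1
  have hG2c : ContinuousOn (fun s => ∫ t in x..s, |f' t|) (Icc x b) := by
    rw [← huxb]; exact continuousOn_primitive_interval hInt2
  have hG1i : IntervalIntegrable (fun s => ∫ t in s..x, |f' t|) volume a x :=
    (hG1c.mono (by rw [hux])).intervalIntegrable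
  have hG2i : IntervalIntegrable (fun s => ∫ t in x..s, |f' t|) volume x b :=
    (hG2c.mono (by rw [huxb])).intervalIntegrable
  -- integrability of |f x - f ·|
  have hDc : ContinuousOn (fun s => |f x - f s|) (Icc a b) :=
    ((continuousOn_const.sub hfc).abs)
  -- step: integral identities via Fubini
  have step6a : ∫ s in a..x, (∫ t in s..x, |f' t|) = ∫ t in a..x, (t - a) * |f' t| := by
    rw [integral_of_le hax, integral_of_le hax]
    rw [setIntegral_congr_fun measurableSet_Ioc
      (fun s hs => by rw [integral_of_le hs.2] : ∀ s ∈ Ioc a x,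
        (∫ t in s..x, |f' t|) = ∫ t in Ioc s x, |f' t|)]
    exact fubini_tri _ a x (habs' a x ha' hx').1
  have step6b : ∫ s in x..b, (∫ t in x..s, |f' t|) = ∫ t in x..b, (b - t) * |f' t| := by
    rw [integral_of_le hxb, integral_of_le hxb]
    rw [setIntegral_congr_fun measurableSet_Ioc
      (fun s hs => by rw [integral_of_le hs.1.le] : ∀ s ∈ Ioc x b,
        (∫ t in x..s, |f' t|) = ∫ t in Ioc x s, |f' t|)]
    exact fubini_tri2 _ x b (habs' x b hx' hb').1
  -- step 1: rewrite LHS as single integral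
  have step1 : f x * (∫ s in a..b, g s) - ∫ s in a..b, f s * g s
      = ∫ s in a..b, (f x - f s) * g s := by
    have e : ∀ s : ℝ, (f x - f s) * g s = f x * g s - f s * g s := fun s => by ring
    simp_rw [e]
    rw [integral_sub ((key_int hg a b ha' hb').const_mul (f x))
      (key_int (φ := fun s => f s * g s) (hfc.mul hg) a b ha' hb'), intervalIntegral.integral_const_mul]
  calc |f x * (∫ s in a..b, g s) - ∫ s in a..b, f s * g s|
      = |∫ s in a..b, (f x - f s) * g s| := by rw [step1]
    _ ≤ ∫ s in a..b, |(f x - f s) * g s| := abs_integral_le_integral_abs hab.le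
    _ ≤ ∫ s in a..b, M * |f x - f s| := by
        refine integral_mono_on hab.le
          (key_int ((continuousOn_const.sub hfc).mul hg).abs a b ha' hb')
          (key_int (continuousOn_const.mul hDc) a b ha' hb') fun s hs => ?_
        rw [abs_mul, mul_comm]
        exact mul_le_mul_of_nonneg_right (hMle s hs) (abs_nonneg _)
    _ = M * ∫ s in a..b, |f x - f s| := integral_const_mul M _
    _ = M * ((∫ s in a..x, |f x - f s|) + ∫ s in x..b, |f x - f s|) := by
        rw [integral_add_adjacent_intervals (key_int hDc a x ha' hx')
          (key_int hDc x b hx' hb')]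
    _ ≤ M * ((∫ t in a..x, (t - a) * |f' t|) + ∫ t in x..b, (b - t) * |f' t|) := by
        apply mul_le_mul_of_nonneg_left _ hM0
        apply add_le_add
        · rw [← step6a]
          exact integral_mono_on hax (key_int hDc a x ha' hx') hG1i hpt1
        · rw [← step6b]
          exact integral_mono_on hxb (key_int hDc x b hx' hb') hG2i hpt2
end
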